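/- arXiv:2503.24151 — 7 statements merged into one kernel-verified Lean document; each statement's English description precedes it below -/
import Mathlib

section
/- Let M ∈ ℝ^{n×m}, ε ∈ ℝ^n, and ϱ > 0. Suppose u* ∈ ℝ^m minimizes f(u) = ‖Mu + ε‖ + ϱ‖u‖ over ℝ^m, and that u* ≠ 0 and Mu* + ε ≠ 0. Set ρ = ϱ‖Mu* + ε‖/‖u*‖. Then u* is the unique minimizer of g(u) = ‖Mu + ε‖² + ρ‖u‖² over ℝ^m. -/
open Matrix BigOperators

/-- Euclidean norm of a vector in `ℝ^a`. -/
noncomputable def euclNormFin {a : ℕ} (x : Fin a → ℝ) : ℝ := Real.sqrt (∑ i, x i ^ 2)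

lemma euclNormFin_eq {a : ℕ} (x : Fin a → ℝ) :
    euclNormFin x = ‖(WithLp.equiv 2 (Fin a → ℝ)).symm x‖ := by
  simp [euclNormFin, EuclideanSpace.norm_eq, Real.norm_eq_abs, sq_abs]

lemma euclNormFin_nonneg {a : ℕ} (x : Fin a → ℝ) : 0 ≤ euclNormFin x := by
  rw [euclNormFin_eq]; exact norm_nonneg _

lemma euclNormFin_pos {a : ℕ} {x : Fin a → ℝ} (hx : x ≠ 0) : 0 < euclNormFin x := by
  rw [euclNormFin_eq]
  refine norm_pos_iff.mpr ?_
  simpa using fun h => hx h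

lemma euclNormFin_add_le {a : ℕ} (x y : Fin a → ℝ) : euclNormFin (x + y) ≤ euclNormFin x + euclNormFin y := by
  rw [euclNormFin_eq, euclNormFin_eq, euclNormFin_eq]
  have : (WithLp.equiv 2 (Fin a → ℝ)).symm (x + y)
      = (WithLp.equiv 2 (Fin a → ℝ)).symm x + (WithLp.equiv 2 (Fin a → ℝ)).symm y := rfl
  rw [this]; exact norm_add_le _ _

lemma euclNormFin_smul {a : ℕ} (c : ℝ) (x : Fin a → ℝ) : euclNormFin (c • x) = |c| * euclNormFin x := by
  rw [euclNormFin_eq, euclNormFin_eq]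
  have : (WithLp.equiv 2 (Fin a → ℝ)).symm (c • x)
      = c • (WithLp.equiv 2 (Fin a → ℝ)).symm x := rfl
  rw [this, norm_smul, Real.norm_eq_abs]

lemma euclNormFin_parallelogram {a : ℕ} (x y : Fin a → ℝ) :
    euclNormFin (x + y) ^ 2 + euclNormFin (x - y) ^ 2 = 2 * (euclNormFin x ^ 2 + euclNormFin y ^ 2) := by
  rw [euclNormFin_eq, euclNormFin_eq, euclNormFin_eq, euclNormFin_eq]
  have h1 : (WithLp.equiv 2 (Fin a → ℝ)).symm (x + y)
      = (WithLp.equiv 2 (Fin a → ℝ)).symm x + (WithLp.equiv 2 (Fin a → ℝ)).symm y := rfl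
  have h2 : (WithLp.equiv 2 (Fin a → ℝ)).symm (x - y)
      = (WithLp.equiv 2 (Fin a → ℝ)).symm x - (WithLp.equiv 2 (Fin a → ℝ)).symm y := rfl
  rw [h1, h2]
  have := parallelogram_law_with_norm ℝ ((WithLp.equiv 2 (Fin a → ℝ)).symm x)
    ((WithLp.equiv 2 (Fin a → ℝ)).symm y)
  simpa [pow_two] using this

/-- If `u*` minimizes `f(u) = ‖Mu + ε‖ + ϱ‖u‖`, with `u* ≠ 0` and `Mu* + ε ≠ 0`,
then with `ρ = ϱ‖Mu* + ε‖/‖u*‖` the point `u*` is the unique minimizer of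
`g(u) = ‖Mu + ε‖² + ρ‖u‖²`. -/
theorem stmt2 {n m : ℕ} (M : Matrix (Fin n) (Fin m) ℝ) (ε : Fin n → ℝ)
    (ϱ : ℝ) (hϱ : 0 < ϱ) (ustar : Fin m → ℝ)
    (hmin : ∀ u : Fin m → ℝ,
      euclNormFin (M *ᵥ ustar + ε) + ϱ * euclNormFin ustar ≤ euclNormFin (M *ᵥ u + ε) + ϱ * euclNormFin u)
    (hu : ustar ≠ 0) (hMu : M *ᵥ ustar + ε ≠ 0)
    (ρ : ℝ) (hρ : ρ = ϱ * euclNormFin (M *ᵥ ustar + ε) / euclNormFin ustar) :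
    ∀ u : Fin m → ℝ, u ≠ ustar →
      euclNormFin (M *ᵥ ustar + ε) ^ 2 + ρ * euclNormFin ustar ^ 2
        < euclNormFin (M *ᵥ u + ε) ^ 2 + ρ * euclNormFin u ^ 2 := by
  intro u hne
  set A := euclNormFin (M *ᵥ ustar + ε) with hAdef
  set B := euclNormFin ustar with hBdef
  have hA : 0 < A := euclNormFin_pos hMu
  have hB : 0 < B := euclNormFin_pos hu
  have hρB : ρ * B = ϱ * A := by rw [hρ]; field_simp
  have hρpos : 0 < ρ := by
    rw [hρ]; positivity
  set x := euclNormFin (M *ᵥ u + ε) with hxdef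
  set y := euclNormFin u with hydef
  have hx : 0 ≤ x := euclNormFin_nonneg _
  have hy : 0 ≤ y := euclNormFin_nonneg _
  have hf : A + ϱ * B ≤ x + ϱ * y := hmin u
  by_cases hcase : x = A ∧ y = B
  · exfalso
    obtain ⟨hxA, hyB⟩ := hcase
    set v := (1/2 : ℝ) • (u + ustar) with hvdef
    have hv1 : M *ᵥ v + ε = (1/2 : ℝ) • ((M *ᵥ u + ε) + (M *ᵥ ustar + ε)) := by
      rw [hvdef, Matrix.mulVec_smul, Matrix.mulVec_add]
      module
    have h1 : euclNormFin (M *ᵥ v + ε) ≤ A := by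
      rw [hv1, euclNormFin_smul]
      have := euclNormFin_add_le (M *ᵥ u + ε) (M *ᵥ ustar + ε)
      rw [← hxdef, ← hAdef, hxA] at this
      rw [abs_of_pos (by norm_num : (0:ℝ) < 1/2)]
      linarith
    have hsub : 0 < euclNormFin (u - ustar) := euclNormFin_pos (sub_ne_zero.mpr hne)
    have hpar := euclNormFin_parallelogram u ustar
    rw [← hxdef] at *
    have h2 : euclNormFin (u + ustar) < 2 * B := by
      nlinarith [euclNormFin_nonneg (u + ustar), hyB]
    have h3 : euclNormFin v < B := by
      rw [hvdef, euclNormFin_smul, abs_of_pos (by norm_num : (0:ℝ) < 1/2)]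
      linarith
    have := hmin v
    nlinarith [this, h1, h3]
  · have hkey : A * (A + ϱ * B) ≤ A * (x + ϱ * y) :=
      mul_le_mul_of_nonneg_left hf hA.le
    have h5 : ρ * B * y = ϱ * A * y := by rw [hρB]
    have h6 : ρ * B * B = ϱ * A * B := by rw [hρB]
    rcases not_and_or.mp hcase with hxA | hyB
    · have hne' : x - A ≠ 0 := sub_ne_zero.mpr hxA
      have hsq : 0 < (x - A) ^ 2 := by positivity
      nlinarith [mul_nonneg hρpos.le (sq_nonneg (y - B)), hsq, hkey, h5, h6]
    · have hne' : y - B ≠ 0 := sub_ne_zero.mpr hyB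
      have hsq : 0 < (y - B) ^ 2 := by positivity
      nlinarith [sq_nonneg (x - A), mul_pos hρpos hsq, hkey, h5, h6]
end

section
/- Let M ∈ ℝ^{n×m}, ε ∈ ℝ^n, and ϱ ∈ ℝ^m with nonnegative entries. Suppose u* ∈ ℝ^m minimizes f(u) = ‖Mu + ε‖ + Σ_{i=1}^m ϱ_i|u_i| over ℝ^m, and that Mu* + ε ≠ 0. Set ρ = 2‖Mu* + ε‖·ϱ ∈ ℝ^m. Then u* also minimizes g(u) = ‖Mu + ε‖² + Σ_{i=1}^m ρ_i|u_i| over ℝ^m. -/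
open Matrix BigOperators

/-- Euclidean norm of a vector in `ℝ^a`. -/
noncomputable def enormFin {a : ℕ} (x : Fin a → ℝ) : ℝ := Real.sqrt (∑ i, x i ^ 2)

lemma enormFin_nonneg {a : ℕ} (x : Fin a → ℝ) : 0 ≤ enormFin x := Real.sqrt_nonneg _

/-- If `u*` minimizes `f(u) = ‖Mu + ε‖ + ∑ i, ϱ i * |u i|` and `Mu* + ε ≠ 0`,
then with `ρ = 2‖Mu* + ε‖ · ϱ` the point `u*` also minimizes
`g(u) = ‖Mu + ε‖² + ∑ i, ρ i * |u i|`. -/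
theorem stmt3 {n m : ℕ} (M : Matrix (Fin n) (Fin m) ℝ) (ε : Fin n → ℝ)
    (ϱ : Fin m → ℝ) (hϱ : ∀ i, 0 ≤ ϱ i) (ustar : Fin m → ℝ)
    (hmin : ∀ u : Fin m → ℝ,
      enormFin (M *ᵥ ustar + ε) + ∑ i, ϱ i * |ustar i|
        ≤ enormFin (M *ᵥ u + ε) + ∑ i, ϱ i * |u i|)
    (hMu : M *ᵥ ustar + ε ≠ 0)
    (ρ : Fin m → ℝ) (hρ : ρ = fun i => 2 * enormFin (M *ᵥ ustar + ε) * ϱ i) :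
    ∀ u : Fin m → ℝ,
      enormFin (M *ᵥ ustar + ε) ^ 2 + ∑ i, ρ i * |ustar i|
        ≤ enormFin (M *ᵥ u + ε) ^ 2 + ∑ i, ρ i * |u i| := by
  intro u
  set N := enormFin (M *ᵥ ustar + ε) with hN
  set a := enormFin (M *ᵥ u + ε) with ha
  have hNn : 0 ≤ N := enormFin_nonneg _
  have han : 0 ≤ a := enormFin_nonneg _
  have hsum : ∀ v : Fin m → ℝ, (∑ i, ρ i * |v i|) = 2 * N * ∑ i, ϱ i * |v i| := by
    intro v
    rw [hρ, Finset.mul_sum]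
    exact Finset.sum_congr rfl fun i _ => by ring
  rw [hsum, hsum]
  have h := hmin u
  nlinarith [sq_nonneg (a - N), h]
end

section
/- Let M ∈ ℝ^{n×m}, ε ∈ ℝ^n, and ϱ > 0. Suppose u* ∈ ℝ^m minimizes the worst-case objective F(u) = max_{‖Δ‖_F ≤ ϱ} ‖(M + Δ)u + ε‖² over ℝ^m, and that u* ≠ 0 and Mu* + ε ≠ 0. Set ρ = ϱ‖Mu* + ε‖/‖u*‖. Then u* is the unique minimizer of the regularized objective Φ(u) = ‖Mu + ε‖² + ρ‖u‖² over ℝ^m; that is, the min-max robust problem and the ridge-regularized problem share the same optimal point. -/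
open Matrix BigOperators

/-- Euclidean norm of a vector in `ℝ^a`. -/
noncomputable def euclNorm {a : ℕ} (x : Fin a → ℝ) : ℝ := Real.sqrt (∑ i, x i ^ 2)

/-- Frobenius norm of a matrix. -/
noncomputable def frob {a b : ℕ} (M : Matrix (Fin a) (Fin b) ℝ) : ℝ :=
  Real.sqrt (∑ i, ∑ j, M i j ^ 2)

/-- Worst-case objective `F(u) = max_{‖Δ‖_F ≤ ϱ} ‖(M + Δ)u + ε‖²`. -/
noncomputable def worstGen {n m : ℕ} (M : Matrix (Fin n) (Fin m) ℝ) (ε : Fin n → ℝ)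
    (ϱ : ℝ) (u : Fin m → ℝ) : ℝ :=
  sSup {v : ℝ | ∃ Δ : Matrix (Fin n) (Fin m) ℝ, frob Δ ≤ ϱ ∧
    v = euclNorm ((M + Δ) *ᵥ u + ε) ^ 2}

namespace Stmt4Aux

lemma sum_sq_nonneg {a : ℕ} (x : Fin a → ℝ) : 0 ≤ ∑ i, x i ^ 2 :=
  Finset.sum_nonneg fun _ _ => sq_nonneg _

lemma enorm_nonneg {a : ℕ} (x : Fin a → ℝ) : 0 ≤ euclNorm x := Real.sqrt_nonneg _

lemma enorm_sq {a : ℕ} (x : Fin a → ℝ) : euclNorm x ^ 2 = ∑ i, x i ^ 2 :=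
  Real.sq_sqrt (sum_sq_nonneg x)

lemma frob_nonneg {a b : ℕ} (M : Matrix (Fin a) (Fin b) ℝ) : 0 ≤ frob M :=
  Real.sqrt_nonneg _

lemma enorm_pos {a : ℕ} {x : Fin a → ℝ} (hx : x ≠ 0) : 0 < euclNorm x := by
  rcases (enorm_nonneg x).lt_or_eq with h | h
  · exact h
  · exfalso
    apply hx
    have h2 : ∑ i, x i ^ 2 = 0 := by
      have := enorm_sq x
      rw [← h] at this
      simpa using this.symm
    funext i
    have := (Finset.sum_eq_zero_iff_of_nonneg (fun i _ => sq_nonneg (x i))).mp h2 i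
      (Finset.mem_univ i)
    have : x i = 0 := by nlinarith [this]
    simpa using this

lemma enorm_triangle {a : ℕ} (x y : Fin a → ℝ) :
    euclNorm (x + y) ≤ euclNorm x + euclNorm y := by
  have key : ∑ i, (x i + y i) ^ 2 ≤ (euclNorm x + euclNorm y) ^ 2 := by
    have hcs : (∑ i, x i * y i) ^ 2 ≤ (∑ i, x i ^ 2) * ∑ i, y i ^ 2 :=
      Finset.sum_mul_sq_le_sq_mul_sq _ _ _
    have hxy : ∑ i, x i * y i ≤ euclNorm x * euclNorm y := by
      have h1 : (∑ i, x i * y i) ^ 2 ≤ (euclNorm x * euclNorm y) ^ 2 := by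
        rw [mul_pow, enorm_sq, enorm_sq]; exact hcs
      have h2 : 0 ≤ euclNorm x * euclNorm y := mul_nonneg (enorm_nonneg _) (enorm_nonneg _)
      nlinarith [h1, h2]
    have hexp : ∑ i, (x i + y i) ^ 2 = (∑ i, x i ^ 2) + (∑ i, y i ^ 2) + 2 * ∑ i, x i * y i := by
      rw [← Finset.sum_add_distrib, Finset.mul_sum, ← Finset.sum_add_distrib]
      congr 1; funext i; ring
    rw [hexp, add_sq, ← enorm_sq x, ← enorm_sq y]
    nlinarith [hxy]
  have : euclNorm (x + y) = Real.sqrt (∑ i, (x i + y i) ^ 2) := by simp [euclNorm]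
  rw [this]
  calc Real.sqrt (∑ i, (x i + y i) ^ 2) ≤ Real.sqrt ((euclNorm x + euclNorm y) ^ 2) :=
        Real.sqrt_le_sqrt key
    _ = euclNorm x + euclNorm y :=
        Real.sqrt_sq (add_nonneg (enorm_nonneg _) (enorm_nonneg _))

lemma enorm_mulVec_le {a b : ℕ} (Δ : Matrix (Fin a) (Fin b) ℝ) (u : Fin b → ℝ) :
    euclNorm (Δ *ᵥ u) ≤ frob Δ * euclNorm u := by
  have key : ∑ i, (Δ *ᵥ u) i ^ 2 ≤ (∑ i, ∑ j, Δ i j ^ 2) * ∑ j, u j ^ 2 := by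
    rw [Finset.sum_mul]
    apply Finset.sum_le_sum
    intro i _
    simpa [Matrix.mulVec, dotProduct] using
      Finset.sum_mul_sq_le_sq_mul_sq Finset.univ (fun j => Δ i j) u
  calc euclNorm (Δ *ᵥ u) = Real.sqrt (∑ i, (Δ *ᵥ u) i ^ 2) := rfl
    _ ≤ Real.sqrt ((∑ i, ∑ j, Δ i j ^ 2) * ∑ j, u j ^ 2) := Real.sqrt_le_sqrt key
    _ = frob Δ * euclNorm u := by
        rw [Real.sqrt_mul (Finset.sum_nonneg fun i _ => sum_sq_nonneg (fun j => Δ i j))]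
        rfl

/-- Every element of the worst-case set is at most `(‖Mu+ε‖ + ϱ‖u‖)²`. -/
lemma mem_le {n m : ℕ} (M : Matrix (Fin n) (Fin m) ℝ) (ε : Fin n → ℝ)
    (ϱ : ℝ) (hϱ : 0 ≤ ϱ) (u : Fin m → ℝ) (v : ℝ)
    (hv : v ∈ {v : ℝ | ∃ Δ : Matrix (Fin n) (Fin m) ℝ, frob Δ ≤ ϱ ∧
      v = euclNorm ((M + Δ) *ᵥ u + ε) ^ 2}) :
    v ≤ (euclNorm (M *ᵥ u + ε) + ϱ * euclNorm u) ^ 2 := by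
  obtain ⟨Δ, hΔ, rfl⟩ := hv
  have hsplit : (M + Δ) *ᵥ u + ε = (M *ᵥ u + ε) + Δ *ᵥ u := by
    rw [Matrix.add_mulVec]; abel
  have h1 : euclNorm ((M + Δ) *ᵥ u + ε) ≤ euclNorm (M *ᵥ u + ε) + ϱ * euclNorm u := by
    rw [hsplit]
    calc euclNorm ((M *ᵥ u + ε) + Δ *ᵥ u) ≤ euclNorm (M *ᵥ u + ε) + euclNorm (Δ *ᵥ u) :=
          enorm_triangle _ _
      _ ≤ euclNorm (M *ᵥ u + ε) + ϱ * euclNorm u := by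
          have := enorm_mulVec_le Δ u
          have h2 : frob Δ * euclNorm u ≤ ϱ * euclNorm u :=
            mul_le_mul_of_nonneg_right hΔ (enorm_nonneg _)
          linarith
  exact pow_le_pow_left₀ (enorm_nonneg _) h1 2

lemma worstGen_le {n m : ℕ} (M : Matrix (Fin n) (Fin m) ℝ) (ε : Fin n → ℝ)
    (ϱ : ℝ) (hϱ : 0 ≤ ϱ) (u : Fin m → ℝ) :
    worstGen M ε ϱ u ≤ (euclNorm (M *ᵥ u + ε) + ϱ * euclNorm u) ^ 2 := by
  apply csSup_le
  · exact ⟨euclNorm ((M + 0) *ᵥ u + ε) ^ 2, 0, by simpa [frob] using hϱ, rfl⟩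
  · intro v hv
    exact mem_le M ε ϱ hϱ u v hv

/-- At `u*` (with `u* ≠ 0`, `Mu*+ε ≠ 0`) the worst case is at least `(‖Mu*+ε‖ + ϱ‖u*‖)²`. -/
lemma worstGen_ge {n m : ℕ} (M : Matrix (Fin n) (Fin m) ℝ) (ε : Fin n → ℝ)
    (ϱ : ℝ) (hϱ : 0 < ϱ) (u : Fin m → ℝ) (hu : u ≠ 0) (hMu : M *ᵥ u + ε ≠ 0) :
    (euclNorm (M *ᵥ u + ε) + ϱ * euclNorm u) ^ 2 ≤ worstGen M ε ϱ u := by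
  set v : Fin n → ℝ := M *ᵥ u + ε with hv
  have ha : 0 < euclNorm u := enorm_pos hu
  have hb : 0 < euclNorm v := enorm_pos hMu
  set c : ℝ := ϱ / (euclNorm v * euclNorm u) with hc
  have hcpos : 0 < c := div_pos hϱ (mul_pos hb ha)
  set Δ : Matrix (Fin n) (Fin m) ℝ := Matrix.of (fun i j => c * v i * u j) with hΔdef
  have hA : ∑ j, u j ^ 2 = euclNorm u ^ 2 := (enorm_sq u).symm
  have hB : ∑ i, v i ^ 2 = euclNorm v ^ 2 := (enorm_sq v).symm
  -- Frobenius norm of Δ is ϱ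
  have hfrob : frob Δ = ϱ := by
    have hsum : ∑ i, ∑ j, Δ i j ^ 2 = c ^ 2 * (euclNorm v ^ 2 * euclNorm u ^ 2) := by
      calc ∑ i, ∑ j, Δ i j ^ 2 = ∑ i, ∑ j, c ^ 2 * (v i ^ 2 * u j ^ 2) := by
            apply Finset.sum_congr rfl; intro i _
            apply Finset.sum_congr rfl; intro j _
            simp only [hΔdef, Matrix.of_apply]; ring
        _ = c ^ 2 * ((∑ i, v i ^ 2) * ∑ j, u j ^ 2) := by
            rw [Finset.sum_mul_sum, Finset.mul_sum]
            apply Finset.sum_congr rfl; intro i _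
            rw [Finset.mul_sum]
        _ = c ^ 2 * (euclNorm v ^ 2 * euclNorm u ^ 2) := by rw [hA, hB]
    rw [frob, hsum]
    rw [show c ^ 2 * (euclNorm v ^ 2 * euclNorm u ^ 2) = (c * (euclNorm v * euclNorm u)) ^ 2 by ring,
      Real.sqrt_sq (by positivity)]
    rw [hc]
    field_simp
  -- Δ *ᵥ u = (c * euclNorm u ^ 2) • v, so (M+Δ)u + ε = (1 + c‖u‖²) • v
  have hmv : (M + Δ) *ᵥ u + ε = fun i => (1 + c * euclNorm u ^ 2) * v i := by
    funext i
    have : (Δ *ᵥ u) i = c * euclNorm u ^ 2 * v i := by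
      simp only [Matrix.mulVec, dotProduct, hΔdef, Matrix.of_apply, ← hA,
        Finset.mul_sum]
      rw [Finset.sum_mul]
      apply Finset.sum_congr rfl
      intro j _
      ring
    have h2 : ((M + Δ) *ᵥ u + ε) i = v i + (Δ *ᵥ u) i := by
      simp [Matrix.add_mulVec, hv]
      ring
    rw [h2, this]
    ring
  have henorm : euclNorm ((M + Δ) *ᵥ u + ε) = (1 + c * euclNorm u ^ 2) * euclNorm v := by
    rw [hmv]
    set t : ℝ := 1 + c * euclNorm u ^ 2 with ht
    have hpos : (0:ℝ) ≤ t := by positivity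
    show Real.sqrt (∑ i, (t * v i) ^ 2) = t * euclNorm v
    rw [show ∑ i, (t * v i) ^ 2 = t ^ 2 * ∑ i, v i ^ 2 by
      rw [Finset.mul_sum]; apply Finset.sum_congr rfl; intro i _; ring]
    rw [Real.sqrt_mul (sq_nonneg _), Real.sqrt_sq hpos]
    rfl
  have hval : euclNorm ((M + Δ) *ᵥ u + ε) = euclNorm v + ϱ * euclNorm u := by
    rw [henorm, hc]
    field_simp
  apply le_csSup
  · exact ⟨(euclNorm v + ϱ * euclNorm u) ^ 2, fun x hx => mem_le M ε ϱ hϱ.le u x hx⟩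
  · exact ⟨Δ, hfrob.le, by rw [hval]⟩

end Stmt4Aux

open Stmt4Aux in
/-- Theorem 1, part 1: if `u*` minimizes the worst-case objective over the generalized
uncertainty set, with `u* ≠ 0` and `Mu* + ε ≠ 0`, then with `ρ = ϱ‖Mu* + ε‖/‖u*‖`
it is the unique minimizer of the ridge-regularized objective
`Φ(u) = ‖Mu + ε‖² + ρ‖u‖²`. -/
theorem stmt4 {n m : ℕ} (M : Matrix (Fin n) (Fin m) ℝ) (ε : Fin n → ℝ)
    (ϱ : ℝ) (hϱ : 0 < ϱ) (ustar : Fin m → ℝ)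
    (hmin : ∀ u : Fin m → ℝ, worstGen M ε ϱ ustar ≤ worstGen M ε ϱ u)
    (hu : ustar ≠ 0) (hMu : M *ᵥ ustar + ε ≠ 0)
    (ρ : ℝ) (hρ : ρ = ϱ * euclNorm (M *ᵥ ustar + ε) / euclNorm ustar) :
    ∀ u : Fin m → ℝ, u ≠ ustar →
      euclNorm (M *ᵥ ustar + ε) ^ 2 + ρ * euclNorm ustar ^ 2
        < euclNorm (M *ᵥ u + ε) ^ 2 + ρ * euclNorm u ^ 2 := by
  set astar := euclNorm ustar with hastar
  set bstar := euclNorm (M *ᵥ ustar + ε) with hbstar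
  have hapos : 0 < astar := enorm_pos hu
  have hbpos : 0 < bstar := enorm_pos hMu
  have hρpos : 0 < ρ := by rw [hρ]; positivity
  have hρa : ρ * astar = ϱ * bstar := by rw [hρ]; field_simp
  -- key: u* minimizes g(u) = ‖Mu+ε‖ + ϱ‖u‖
  have hg : ∀ u : Fin m → ℝ, bstar + ϱ * astar ≤ euclNorm (M *ᵥ u + ε) + ϱ * euclNorm u := by
    intro u
    have h1 : (bstar + ϱ * astar) ^ 2 ≤ worstGen M ε ϱ ustar :=
      worstGen_ge M ε ϱ hϱ ustar hu hMu
    have h2 : worstGen M ε ϱ u ≤ (euclNorm (M *ᵥ u + ε) + ϱ * euclNorm u) ^ 2 :=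
      worstGen_le M ε ϱ hϱ.le u
    have h3 : (bstar + ϱ * astar) ^ 2 ≤ (euclNorm (M *ᵥ u + ε) + ϱ * euclNorm u) ^ 2 :=
      le_trans h1 (le_trans (hmin u) h2)
    have hx : (0:ℝ) ≤ bstar + ϱ * astar := by positivity
    have hy : (0:ℝ) ≤ euclNorm (M *ᵥ u + ε) + ϱ * euclNorm u :=
      add_nonneg (enorm_nonneg _) (mul_nonneg hϱ.le (enorm_nonneg _))
    calc bstar + ϱ * astar = Real.sqrt ((bstar + ϱ * astar) ^ 2) := (Real.sqrt_sq hx).symm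
      _ ≤ Real.sqrt ((euclNorm (M *ᵥ u + ε) + ϱ * euclNorm u) ^ 2) := Real.sqrt_le_sqrt h3
      _ = euclNorm (M *ᵥ u + ε) + ϱ * euclNorm u := Real.sqrt_sq hy
  -- non-strict minimality of Φ at u*
  have hΦ : ∀ u : Fin m → ℝ,
      bstar ^ 2 + ρ * astar ^ 2 ≤ euclNorm (M *ᵥ u + ε) ^ 2 + ρ * euclNorm u ^ 2 := by
    intro u
    set a := euclNorm u
    set b := euclNorm (M *ᵥ u + ε)
    have ha : 0 ≤ a := enorm_nonneg u
    have hb : 0 ≤ b := enorm_nonneg _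
    have hgu := hg u
    nlinarith [sq_nonneg (b - bstar), sq_nonneg (a - astar), mul_pos hρpos hapos,
      mul_nonneg hρpos.le (sq_nonneg (a - astar))]
  intro u hune
  by_contra hle
  push_neg at hle
  -- midpoint argument: strict convexity of Φ
  set w : Fin m → ℝ := fun i => (u i + ustar i) / 2 with hw
  set a := euclNorm u with haa
  set b := euclNorm (M *ᵥ u + ε) with hbb
  -- ‖Mw + ε‖ ≤ (b + b*)/2
  have hMw : M *ᵥ w + ε = fun i => (((M *ᵥ u + ε) i) + ((M *ᵥ ustar + ε) i)) / 2 := by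
    funext i
    simp only [Pi.add_apply, Matrix.mulVec, dotProduct, hw]
    have h4 : ∑ j, M i j * ((u j + ustar j) / 2)
        = (∑ j, M i j * u j + ∑ j, M i j * ustar j) / 2 := by
      rw [← Finset.sum_add_distrib, Finset.sum_div]
      apply Finset.sum_congr rfl
      intro j _
      ring
    rw [h4]
    ring
  have hbw : euclNorm (M *ᵥ w + ε) ≤ (b + bstar) / 2 := by
    have h2 : M *ᵥ w + ε = (fun i => ((M *ᵥ u + ε) i) / 2) + (fun i => ((M *ᵥ ustar + ε) i) / 2) := by
      rw [hMw]; funext i; simp [Pi.add_apply]; ring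
    rw [h2]
    have htr := enorm_triangle (fun i => ((M *ᵥ u + ε) i) / 2) (fun i => ((M *ᵥ ustar + ε) i) / 2)
    have hhalf : ∀ (k : ℕ) (x : Fin k → ℝ), euclNorm (fun i => x i / 2) = euclNorm x / 2 := by
      intro k x
      simp only [euclNorm]
      rw [show ∑ i, (x i / 2) ^ 2 = (∑ i, x i ^ 2) / 4 by
        rw [Finset.sum_div]; apply Finset.sum_congr rfl; intro i _; ring]
      rw [show ((∑ i, x i ^ 2) / 4 : ℝ) = (∑ i, x i ^ 2) * (1/2)^2 by ring,
        Real.sqrt_mul (sum_sq_nonneg _), Real.sqrt_sq (by norm_num)]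
      ring
    rw [hhalf _ (M *ᵥ u + ε), hhalf _ (M *ᵥ ustar + ε)] at htr
    calc euclNorm _ ≤ b / 2 + bstar / 2 := htr
      _ = (b + bstar) / 2 := by ring
  -- ‖w‖² = (a² + a*²)/2 − ‖(u−u*)/2‖², strictly less than (a²+a*²)/2
  have haw : euclNorm w ^ 2 < (a ^ 2 + astar ^ 2) / 2 := by
    rw [enorm_sq, haa, hastar, enorm_sq, enorm_sq]
    have hident : ∑ i, ((u i + ustar i) / 2) ^ 2
        = (∑ i, u i ^ 2 + ∑ i, ustar i ^ 2) / 2 - ∑ i, ((u i - ustar i) / 2) ^ 2 := by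
      calc ∑ i, ((u i + ustar i) / 2) ^ 2
          = ∑ i, ((u i ^ 2 + ustar i ^ 2) / 2 - ((u i - ustar i) / 2) ^ 2) :=
            Finset.sum_congr rfl (fun i _ => by ring)
        _ = (∑ i, u i ^ 2 + ∑ i, ustar i ^ 2) / 2 - ∑ i, ((u i - ustar i) / 2) ^ 2 := by
            rw [Finset.sum_sub_distrib, ← Finset.sum_add_distrib, Finset.sum_div]
    have hpos : 0 < ∑ i, ((u i - ustar i) / 2) ^ 2 := by
      have hne : (fun i => (u i - ustar i) / 2) ≠ 0 := by
        intro hzero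
        apply hune
        funext i
        have := congrFun hzero i
        simp at this
        linarith
      have := enorm_pos hne
      have h2 := enorm_sq (fun i => (u i - ustar i) / 2)
      nlinarith [this]
    have hwsum : ∑ i, w i ^ 2 = ∑ i, ((u i + ustar i) / 2) ^ 2 := rfl
    rw [hwsum]
    linarith [hident]
  -- combine
  have hΦw := hΦ w
  have hbw2 : euclNorm (M *ᵥ w + ε) ^ 2 ≤ ((b + bstar) / 2) ^ 2 :=
    pow_le_pow_left₀ (enorm_nonneg _) hbw 2
  have hbbound : ((b + bstar) / 2) ^ 2 ≤ (b ^ 2 + bstar ^ 2) / 2 := by nlinarith [sq_nonneg (b - bstar)]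
  have : euclNorm (M *ᵥ w + ε) ^ 2 + ρ * euclNorm w ^ 2
      < (b ^ 2 + ρ * a ^ 2 + (bstar ^ 2 + ρ * astar ^ 2)) / 2 := by
    nlinarith [mul_lt_mul_of_pos_left haw hρpos]
  nlinarith [hΦw, hle, this]
end

section
/- Let M ∈ ℝ^{n×m}, ε ∈ ℝ^n, and ϱ ∈ ℝ^m with nonnegative entries. Suppose u* ∈ ℝ^m minimizes the worst-case objective F(u) = max_{Δ : ‖Δ_i‖ ≤ ϱ_i ∀i} ‖(M + Δ)u + ε‖² over ℝ^m, and that Mu* + ε ≠ 0. Set ρ = 2‖Mu* + ε‖·ϱ ∈ ℝ^m. Then u* also minimizes the regularized objective Φ(u) = ‖Mu + ε‖² + Σ_{i=1}^m ρ_i|u_i| over ℝ^m; that is, the min-max robust problem and the ℓ1-regularized (lasso-type) problem share the same optimal point. -/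
open Matrix BigOperators

/-- Euclidean norm of a vector in `ℝ^a`. -/
noncomputable def enorm {a : ℕ} (x : Fin a → ℝ) : ℝ := Real.sqrt (∑ i, x i ^ 2)

/-- Euclidean norm of the `i`-th column of a matrix. -/
noncomputable def colnorm {a b : ℕ} (M : Matrix (Fin a) (Fin b) ℝ) (i : Fin b) : ℝ :=
  Real.sqrt (∑ j, M j i ^ 2)

/-- Worst-case objective `F(u) = max_{Δ : ‖Δ_i‖ ≤ ϱ_i ∀ i} ‖(M + Δ)u + ε‖²`. -/
noncomputable def worstCol {n m : ℕ} (M : Matrix (Fin n) (Fin m) ℝ) (ε : Fin n → ℝ)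
    (ϱ : Fin m → ℝ) (u : Fin m → ℝ) : ℝ :=
  sSup {v : ℝ | ∃ Δ : Matrix (Fin n) (Fin m) ℝ, (∀ i, colnorm Δ i ≤ ϱ i) ∧
    v = _root_.enorm ((M + Δ) *ᵥ u + ε) ^ 2}

namespace Stmt5Aux

noncomputable def E {a : ℕ} (x : Fin a → ℝ) : EuclideanSpace ℝ (Fin a) :=
  (WithLp.equiv 2 (Fin a → ℝ)).symm x

lemma enorm_eq {a : ℕ} (x : Fin a → ℝ) : _root_.enorm x = ‖E x‖ := by
  rw [EuclideanSpace.norm_eq]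
  simp [_root_.enorm, E, Real.norm_eq_abs, sq_abs]

lemma enorm_nonneg {a : ℕ} (x : Fin a → ℝ) : 0 ≤ _root_.enorm x := Real.sqrt_nonneg _

lemma enorm_smul {a : ℕ} (c : ℝ) (x : Fin a → ℝ) : _root_.enorm (c • x) = |c| * _root_.enorm x := by
  rw [enorm_eq, enorm_eq]
  have h : E (c • x) = c • E x := rfl
  rw [h, norm_smul, Real.norm_eq_abs]

lemma enorm_eq_zero {a : ℕ} {x : Fin a → ℝ} : _root_.enorm x = 0 ↔ x = 0 := by
  rw [enorm_eq, norm_eq_zero]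
  exact ⟨fun h => (WithLp.equiv 2 (Fin a → ℝ)).symm.injective h, fun h => by rw [h]; rfl⟩

lemma colnorm_eq {a b : ℕ} (M : Matrix (Fin a) (Fin b) ℝ) (i : Fin b) :
    colnorm M i = _root_.enorm (fun j => M j i) := rfl

lemma enorm_add_le {a : ℕ} (x y : Fin a → ℝ) : _root_.enorm (x + y) ≤ _root_.enorm x + _root_.enorm y := by
  rw [enorm_eq, enorm_eq, enorm_eq]
  exact norm_add_le (E x) (E y)

lemma enorm_mulVec_le {a b : ℕ} (Δ : Matrix (Fin a) (Fin b) ℝ) (u : Fin b → ℝ) :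
    _root_.enorm (Δ *ᵥ u) ≤ ∑ i, colnorm Δ i * |u i| := by
  have h1 : Δ *ᵥ u = ∑ i, u i • (fun j => Δ j i) := by
    funext j
    simp [mulVec, dotProduct, Finset.sum_apply, mul_comm]
  have h : E (Δ *ᵥ u) = ∑ i, u i • E (fun j => Δ j i) := by
    show (WithLp.linearEquiv 2 ℝ (Fin a → ℝ)).symm (Δ *ᵥ u) = _
    rw [h1, map_sum]
    exact Finset.sum_congr rfl fun i _ => map_smul _ _ _
  rw [enorm_eq, h]
  calc ‖∑ i, u i • E (fun j => Δ j i)‖ ≤ ∑ i, ‖u i • E (fun j => Δ j i)‖ :=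
        norm_sum_le _ _
    _ = ∑ i, colnorm Δ i * |u i| := by
        refine Finset.sum_congr rfl fun i _ => ?_
        rw [norm_smul, Real.norm_eq_abs, colnorm_eq, enorm_eq, mul_comm]

lemma worst_eq {n m : ℕ} (hn : 0 < n) (M : Matrix (Fin n) (Fin m) ℝ) (ε : Fin n → ℝ)
    (ϱ : Fin m → ℝ) (hϱ : ∀ i, 0 ≤ ϱ i) (u : Fin m → ℝ) :
    worstCol M ε ϱ u = (_root_.enorm (M *ᵥ u + ε) + ∑ i, ϱ i * |u i|) ^ 2 := by
  set v : Fin n → ℝ := M *ᵥ u + ε with hv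
  set g : ℝ := ∑ i, ϱ i * |u i| with hg
  have hg0 : 0 ≤ g := Finset.sum_nonneg fun i _ => mul_nonneg (hϱ i) (abs_nonneg _)
  have hN0 : 0 ≤ _root_.enorm v := enorm_nonneg v
  have hrearr : ∀ Δ : Matrix (Fin n) (Fin m) ℝ, (M + Δ) *ᵥ u + ε = v + Δ *ᵥ u := by
    intro Δ
    rw [add_mulVec, hv]
    abel
  -- upper bound for every admissible Δ
  have hub : ∀ Δ : Matrix (Fin n) (Fin m) ℝ, (∀ i, colnorm Δ i ≤ ϱ i) →
      _root_.enorm ((M + Δ) *ᵥ u + ε) ≤ _root_.enorm v + g := by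
    intro Δ hΔ
    rw [hrearr Δ]
    refine (enorm_add_le v (Δ *ᵥ u)).trans ?_
    refine add_le_add_right ((enorm_mulVec_le Δ u).trans ?_) _
    exact Finset.sum_le_sum fun i _ => mul_le_mul_of_nonneg_right (hΔ i) (abs_nonneg _)
  -- build a unit vector w with v = _root_.enorm v • w
  obtain ⟨w, hw1, hw2⟩ : ∃ w : Fin n → ℝ, _root_.enorm w = 1 ∧ v = _root_.enorm v • w := by
    by_cases hv0 : v = 0
    · refine ⟨Pi.single (⟨0, hn⟩ : Fin n) 1, ?_, ?_⟩
      · simp only [_root_.enorm]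
        rw [Finset.sum_eq_single (⟨0, hn⟩ : Fin n)]
        · simp
        · intro b _ hb; simp [Pi.single_apply, hb]
        · simp
      · rw [hv0, show _root_.enorm (0 : Fin n → ℝ) = 0 from enorm_eq_zero.2 rfl, zero_smul]
    · have hNpos : 0 < _root_.enorm v := lt_of_le_of_ne hN0 (fun h => hv0 (enorm_eq_zero.1 h.symm))
      refine ⟨(_root_.enorm v)⁻¹ • v, ?_, ?_⟩
      · rw [enorm_smul, abs_of_nonneg (inv_nonneg.2 hN0), inv_mul_cancel₀ hNpos.ne']
      · rw [smul_smul, mul_inv_cancel₀ hNpos.ne', one_smul]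
  -- sign vector
  let s : Fin m → ℝ := fun i => if 0 ≤ u i then 1 else -1
  have hs1 : ∀ i, |s i| = 1 := by
    intro i
    by_cases h : 0 ≤ u i <;> simp [s, h]
  have hs2 : ∀ i, s i * u i = |u i| := by
    intro i
    by_cases h : 0 ≤ u i
    · simp [s, h, abs_of_nonneg h]
    · simp [s, h, abs_of_neg (lt_of_not_ge h)]
  -- the attaining Δ
  let Δ : Matrix (Fin n) (Fin m) ℝ := Matrix.of fun j i => (ϱ i * s i) * w j
  have hΔdef : ∀ j i, Δ j i = (ϱ i * s i) * w j := fun j i => rfl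
  have hΔcol : ∀ i, colnorm Δ i ≤ ϱ i := by
    intro i
    have : (fun j => Δ j i) = (ϱ i * s i) • w := by funext j; rw [hΔdef]; rfl
    rw [colnorm_eq, this, enorm_smul, hw1, mul_one, abs_mul, hs1, mul_one,
      abs_of_nonneg (hϱ i)]
  have hΔval : (M + Δ) *ᵥ u + ε = (_root_.enorm v + g) • w := by
    rw [hrearr Δ]
    have hΔu : Δ *ᵥ u = g • w := by
      funext j
      simp only [mulVec, dotProduct, Pi.smul_apply, smul_eq_mul, hg]
      rw [Finset.sum_mul]
      refine Finset.sum_congr rfl fun i _ => ?_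
      rw [hΔdef, ← hs2 i]; ring
    rw [hΔu, add_smul, ← hw2]
  have hmem : (_root_.enorm v + g) ^ 2 ∈ {x : ℝ | ∃ Δ : Matrix (Fin n) (Fin m) ℝ,
      (∀ i, colnorm Δ i ≤ ϱ i) ∧ x = _root_.enorm ((M + Δ) *ᵥ u + ε) ^ 2} := by
    refine ⟨Δ, hΔcol, ?_⟩
    rw [hΔval, enorm_smul, hw1, mul_one, abs_of_nonneg (add_nonneg hN0 hg0)]
  have hbdd : ∀ x ∈ {x : ℝ | ∃ Δ : Matrix (Fin n) (Fin m) ℝ,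
      (∀ i, colnorm Δ i ≤ ϱ i) ∧ x = _root_.enorm ((M + Δ) *ᵥ u + ε) ^ 2}, x ≤ (_root_.enorm v + g) ^ 2 := by
    rintro x ⟨Δ', hΔ', rfl⟩
    exact pow_le_pow_left₀ (enorm_nonneg _) (hub Δ' hΔ') 2
  refine le_antisymm (Real.sSup_le hbdd (sq_nonneg _)) (le_csSup ⟨_, hbdd⟩ hmem)

end Stmt5Aux

open Stmt5Aux in
/-- Theorem 1, part 2: if `u*` minimizes the worst-case objective over the column-wise
uncertainty set and `Mu* + ε ≠ 0`, then with `ρ = 2‖Mu* + ε‖ · ϱ` the point `u*`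
also minimizes the lasso-type objective `Φ(u) = ‖Mu + ε‖² + ∑ i, ρ i * |u i|`. -/
theorem stmt5 {n m : ℕ} (M : Matrix (Fin n) (Fin m) ℝ) (ε : Fin n → ℝ)
    (ϱ : Fin m → ℝ) (hϱ : ∀ i, 0 ≤ ϱ i) (ustar : Fin m → ℝ)
    (hmin : ∀ u : Fin m → ℝ, worstCol M ε ϱ ustar ≤ worstCol M ε ϱ u)
    (hMu : M *ᵥ ustar + ε ≠ 0)
    (ρ : Fin m → ℝ) (hρ : ρ = fun i => 2 * _root_.enorm (M *ᵥ ustar + ε) * ϱ i) :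
    ∀ u : Fin m → ℝ,
      _root_.enorm (M *ᵥ ustar + ε) ^ 2 + ∑ i, ρ i * |ustar i|
        ≤ _root_.enorm (M *ᵥ u + ε) ^ 2 + ∑ i, ρ i * |u i| := by
  intro u
  -- n must be positive
  rcases Nat.eq_zero_or_pos n with hn0 | hn
  · subst hn0
    exact absurd (funext fun i => i.elim0) hMu
  set Ns : ℝ := _root_.enorm (M *ᵥ ustar + ε) with hNs
  set N : ℝ := _root_.enorm (M *ᵥ u + ε) with hN
  set gs : ℝ := ∑ i, ϱ i * |ustar i| with hgs
  set g : ℝ := ∑ i, ϱ i * |u i| with hgdef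
  have hg0 : 0 ≤ g := Finset.sum_nonneg fun i _ => mul_nonneg (hϱ i) (abs_nonneg _)
  have hgs0 : 0 ≤ gs := Finset.sum_nonneg fun i _ => mul_nonneg (hϱ i) (abs_nonneg _)
  have hN0 : 0 ≤ N := enorm_nonneg _
  have hNs0 : 0 ≤ Ns := enorm_nonneg _
  have hNspos : 0 < Ns :=
    lt_of_le_of_ne hNs0 fun h => hMu (enorm_eq_zero.1 h.symm)
  have hsq : (Ns + gs) ^ 2 ≤ (N + g) ^ 2 := by
    have := hmin u
    rwa [worst_eq hn M ε ϱ hϱ ustar, worst_eq hn M ε ϱ hϱ u] at this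
  have hkey : Ns + gs ≤ N + g := by
    have h := Real.sqrt_le_sqrt hsq
    rwa [Real.sqrt_sq (add_nonneg hNs0 hgs0), Real.sqrt_sq (add_nonneg hN0 hg0)] at h
  have hsum : ∀ w : Fin m → ℝ, ∑ i, ρ i * |w i| = 2 * Ns * ∑ i, ϱ i * |w i| := by
    intro w
    rw [hρ, Finset.mul_sum]
    refine Finset.sum_congr rfl fun i _ => ?_
    show 2 * Ns * ϱ i * |w i| = 2 * Ns * (ϱ i * |w i|)
    ring
  rw [hsum ustar, hsum u, ← hgs, ← hgdef]
  nlinarith [sq_nonneg (N - Ns), mul_nonneg hNspos.le (sub_nonneg.2 hkey)]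
end

section
/- Consider the interconnection of the plant with the ℓ2-controller. Then for every k ≥ 0, ‖x_{k+1} − x_{ss,k+1}‖_P ≤ c1·‖x_k − x_{ss,k}‖_P + η·c2·‖u_k − u_k*‖ + η·c3·‖H − Ĥ‖·‖u_k‖ + c4·‖d_{x,k+1} − d_{x,k}‖, where c1 = √(1−γ) + 2ηλ‖(I−A)^{-1}B‖·‖ĤᵀQ‖·‖C‖·√(λ_max(P))/√(λ_min(P)), c2 = √(λ_max(P))·‖(I−A)^{-1}B‖·‖2(R + λĤᵀQĤ + ρ_gen I)‖, c3 = 2λ√(λ_max(P))·‖(I−A)^{-1}B‖·‖ĤᵀQ‖, and c4 = √(λ_max(P))·‖(I−A)^{-1}‖. -/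
open Matrix BigOperators

/-- Spectral (ℓ2-operator) norm of a matrix. -/
noncomputable def spec {a b : ℕ} (M : Matrix (Fin a) (Fin b) ℝ) : ℝ :=
  ‖LinearMap.toContinuousLinearMap (Matrix.toEuclideanLin M)‖

/-- Largest eigenvalue of a symmetric matrix (Rayleigh quotient over the unit sphere). -/
noncomputable def eigMax {a : ℕ} (P : Matrix (Fin a) (Fin a) ℝ) : ℝ :=
  sSup {r : ℝ | ∃ x : Fin a → ℝ, ∑ i, x i ^ 2 = 1 ∧ r = x ⬝ᵥ P *ᵥ x}

/-- Smallest eigenvalue of a symmetric matrix (Rayleigh quotient over the unit sphere). -/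
noncomputable def eigMin {a : ℕ} (P : Matrix (Fin a) (Fin a) ℝ) : ℝ :=
  sInf {r : ℝ | ∃ x : Fin a → ℝ, ∑ i, x i ^ 2 = 1 ∧ r = x ⬝ᵥ P *ᵥ x}

/-- The `P`-weighted norm `‖x‖_P = √(xᵀ P x)`. -/
noncomputable def pnorm {a : ℕ} (P : Matrix (Fin a) (Fin a) ℝ) (x : Fin a → ℝ) : ℝ :=
  Real.sqrt (x ⬝ᵥ P *ᵥ x)

/-- The regularized objective `Φ_{ℓ2,k}(v) = vᵀRv + λ(Ĥv + d − r)ᵀQ(Ĥv + d − r) + ρ_gen ‖v‖²`. -/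
noncomputable def Phi2 {m p : ℕ} (R : Matrix (Fin m) (Fin m) ℝ) (Q : Matrix (Fin p) (Fin p) ℝ)
    (lam ρgen : ℝ) (Hhat : Matrix (Fin p) (Fin m) ℝ) (d rk : Fin p → ℝ) (v : Fin m → ℝ) : ℝ :=
  v ⬝ᵥ R *ᵥ v + lam * ((Hhat *ᵥ v + d - rk) ⬝ᵥ Q *ᵥ (Hhat *ᵥ v + d - rk))
    + ρgen * ∑ i, v i ^ 2

namespace S9
open Matrix BigOperators

variable {a b c : ℕ}

noncomputable def toE {a : ℕ} : (Fin a → ℝ) ≃ₗ[ℝ] EuclideanSpace ℝ (Fin a) :=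
  (WithLp.linearEquiv 2 ℝ (Fin a → ℝ)).symm

lemma enorm_eq (v : Fin a → ℝ) : _root_.enorm v = ‖toE v‖ := by
  rw [EuclideanSpace.norm_eq]
  simp [_root_.enorm, toE, Real.norm_eq_abs, sq_abs]

lemma enorm_nonneg (v : Fin a → ℝ) : 0 ≤ _root_.enorm v := Real.sqrt_nonneg _

lemma enorm_add_le (v w : Fin a → ℝ) : _root_.enorm (v + w) ≤ _root_.enorm v + _root_.enorm w := by
  simp only [enorm_eq, map_add]; exact norm_add_le _ _

lemma enorm_smul (t : ℝ) (v : Fin a → ℝ) : _root_.enorm (t • v) = |t| * _root_.enorm v := by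
  simp only [enorm_eq, _root_.map_smul, norm_smul, Real.norm_eq_abs]

lemma spec_nonneg (M : Matrix (Fin a) (Fin b) ℝ) : 0 ≤ spec M := norm_nonneg _

lemma enorm_mulVec_le (M : Matrix (Fin a) (Fin b) ℝ) (v : Fin b → ℝ) :
    _root_.enorm (M *ᵥ v) ≤ spec M * _root_.enorm v := by
  have h : toE (M *ᵥ v) = (LinearMap.toContinuousLinearMap (Matrix.toEuclideanLin M)) (toE v) := rfl
  rw [enorm_eq, enorm_eq, h]
  exact (LinearMap.toContinuousLinearMap (Matrix.toEuclideanLin M)).le_opNorm _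




lemma dotProduct_self_eq (v : Fin a → ℝ) : v ⬝ᵥ v = ∑ i, v i ^ 2 := by
  simp [dotProduct, pow_two]

lemma bilin_symm {M : Matrix (Fin a) (Fin a) ℝ} (hM : Mᵀ = M) (v w : Fin a → ℝ) :
    v ⬝ᵥ M *ᵥ w = w ⬝ᵥ M *ᵥ v := by
  rw [dotProduct_mulVec, ← mulVec_transpose, hM, dotProduct_comm]

lemma quad_add {M : Matrix (Fin a) (Fin a) ℝ} (hM : Mᵀ = M) (u v : Fin a → ℝ) :
    (u + v) ⬝ᵥ M *ᵥ (u + v) = u ⬝ᵥ M *ᵥ u + v ⬝ᵥ M *ᵥ v + 2 * (v ⬝ᵥ M *ᵥ u) := by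
  rw [mulVec_add, dotProduct_add, add_dotProduct, add_dotProduct, bilin_symm hM u v]
  ring

/-- half-gradient of Phi2 -/
noncomputable def gvec (R : Matrix (Fin m) (Fin m) ℝ) (Q : Matrix (Fin p) (Fin p) ℝ)
    (lam ρgen : ℝ) (Hhat : Matrix (Fin p) (Fin m) ℝ) (d rk : Fin p → ℝ) (w : Fin m → ℝ) :
    Fin m → ℝ :=
  R *ᵥ w + lam • (Hhatᵀ *ᵥ (Q *ᵥ (Hhat *ᵥ w + d - rk))) + ρgen • w

/-- quadratic part -/
noncomputable def qf (R : Matrix (Fin m) (Fin m) ℝ) (Q : Matrix (Fin p) (Fin p) ℝ)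
    (lam ρgen : ℝ) (Hhat : Matrix (Fin p) (Fin m) ℝ) (z : Fin m → ℝ) : ℝ :=
  z ⬝ᵥ R *ᵥ z + lam * ((Hhat *ᵥ z) ⬝ᵥ Q *ᵥ (Hhat *ᵥ z)) + ρgen * ∑ i, z i ^ 2

lemma phi2_expand (R : Matrix (Fin m) (Fin m) ℝ) (Q : Matrix (Fin p) (Fin p) ℝ)
    (hRs : Rᵀ = R) (hQs : Qᵀ = Q)
    (lam ρgen : ℝ) (Hhat : Matrix (Fin p) (Fin m) ℝ) (d rk : Fin p → ℝ) (w z : Fin m → ℝ) :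
    Phi2 R Q lam ρgen Hhat d rk (w + z)
      = Phi2 R Q lam ρgen Hhat d rk w + qf R Q lam ρgen Hhat z
        + 2 * (z ⬝ᵥ gvec R Q lam ρgen Hhat d rk w) := by
  have hQterm : Hhat *ᵥ (w + z) + d - rk = (Hhat *ᵥ w + d - rk) + Hhat *ᵥ z := by
    rw [mulVec_add]; abel
  have hsum : ∑ i, (w + z) i ^ 2 = ∑ i, w i ^ 2 + ∑ i, z i ^ 2 + 2 * (z ⬝ᵥ w) := by
    have : ∀ i : Fin m, (w + z) i ^ 2 = w i ^ 2 + z i ^ 2 + 2 * (z i * w i) := by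
      intro i; simp [Pi.add_apply]; ring
    rw [Finset.sum_congr rfl fun i _ => this i, dotProduct, Finset.mul_sum,
      Finset.sum_add_distrib, Finset.sum_add_distrib]
  have hdot : z ⬝ᵥ (Hhatᵀ *ᵥ (Q *ᵥ (Hhat *ᵥ w + d - rk)))
      = (Hhat *ᵥ z) ⬝ᵥ (Q *ᵥ (Hhat *ᵥ w + d - rk)) := by
    rw [dotProduct_mulVec, vecMul_transpose]
  simp only [Phi2, gvec, qf, hQterm, quad_add hRs, quad_add hQs, hsum,
    dotProduct_add, dotProduct_smul, smul_eq_mul, hdot]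
  ring

lemma qf_smul (R : Matrix (Fin m) (Fin m) ℝ) (Q : Matrix (Fin p) (Fin p) ℝ)
    (lam ρgen : ℝ) (Hhat : Matrix (Fin p) (Fin m) ℝ) (c : ℝ) (z : Fin m → ℝ) :
    qf R Q lam ρgen Hhat (c • z) = c ^ 2 * qf R Q lam ρgen Hhat z := by
  have hs : ∑ i, (c • z) i ^ 2 = c ^ 2 * ∑ i, z i ^ 2 := by
    rw [Finset.mul_sum]; refine Finset.sum_congr rfl fun i _ => ?_
    simp [mul_pow]
  simp only [qf, mulVec_smul, smul_dotProduct, dotProduct_smul, smul_eq_mul, hs]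
  ring

lemma qf_pos {R : Matrix (Fin m) (Fin m) ℝ} {Q : Matrix (Fin p) (Fin p) ℝ}
    (hR : R.PosSemidef) (hQ : Q.PosSemidef) {lam ρgen : ℝ} (hlam : 0 ≤ lam) (hρ : 0 < ρgen)
    (Hhat : Matrix (Fin p) (Fin m) ℝ) {z : Fin m → ℝ} (hz : z ≠ 0) :
    0 < qf R Q lam ρgen Hhat z := by
  have h1 : 0 ≤ z ⬝ᵥ R *ᵥ z := by simpa using hR.dotProduct_mulVec_nonneg z
  have h2 : 0 ≤ (Hhat *ᵥ z) ⬝ᵥ Q *ᵥ (Hhat *ᵥ z) := by simpa using hQ.dotProduct_mulVec_nonneg (Hhat *ᵥ z)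
  have h3 : 0 < ∑ i, z i ^ 2 := by
    rcases lt_or_eq_of_le (Finset.sum_nonneg fun i _ => sq_nonneg (z i)) with h | h
    · exact h
    · exfalso; apply hz; funext i
      have := (Finset.sum_eq_zero_iff_of_nonneg fun j _ => sq_nonneg (z j)).mp h.symm i
        (Finset.mem_univ i)
      simpa using pow_eq_zero_iff (n := 2) (by norm_num) |>.mp this
  have := mul_nonneg hlam h2
  have := mul_pos hρ h3
  unfold qf; linarith

/-- First-order optimality: the half-gradient vanishes at the strict minimizer. -/
lemma grad_eq_zero {R : Matrix (Fin m) (Fin m) ℝ} {Q : Matrix (Fin p) (Fin p) ℝ}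
    (hR : R.PosSemidef) (hQ : Q.PosSemidef) {lam ρgen : ℝ} (hlam : 0 ≤ lam) (hρ : 0 < ρgen)
    (Hhat : Matrix (Fin p) (Fin m) ℝ) (d rk : Fin p → ℝ) (us : Fin m → ℝ)
    (hmin : ∀ v : Fin m → ℝ, v ≠ us →
      Phi2 R Q lam ρgen Hhat d rk us < Phi2 R Q lam ρgen Hhat d rk v) :
    gvec R Q lam ρgen Hhat d rk us = 0 := by
  have hRs : Rᵀ = R := by exact (show R.IsSymm by simpa using hR.isHermitian)
  have hQs : Qᵀ = Q := by exact (show Q.IsSymm by simpa using hQ.isHermitian)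
  by_contra hg
  set g := gvec R Q lam ρgen Hhat d rk us with hgdef
  have hq : 0 < qf R Q lam ρgen Hhat g := qf_pos hR hQ hlam hρ Hhat hg
  have hgg : 0 < g ⬝ᵥ g := by
    rw [dotProduct_self_eq]
    rcases lt_or_eq_of_le (Finset.sum_nonneg fun i _ => sq_nonneg (g i)) with h | h
    · exact h
    · exfalso; apply hg; funext i
      have := (Finset.sum_eq_zero_iff_of_nonneg fun j _ => sq_nonneg (g j)).mp h.symm i
        (Finset.mem_univ i)
      simpa using pow_eq_zero_iff (n := 2) (by norm_num) |>.mp this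
  set t : ℝ := (g ⬝ᵥ g) / qf R Q lam ρgen Hhat g with htdef
  have ht : 0 < t := div_pos hgg hq
  set z : Fin m → ℝ := (-t) • g with hzdef
  have hzne : z ≠ 0 := by
    simp only [hzdef, Ne, smul_eq_zero, neg_eq_zero, not_or]
    exact ⟨ne_of_gt ht, hg⟩
  have hvne : us + z ≠ us := by
    intro h
    apply hzne
    have := congrArg (fun w => w - us) h
    simpa using this
  have hlt := hmin (us + z) hvne
  have hexp := phi2_expand R Q hRs hQs lam ρgen Hhat d rk us z
  have hzq : qf R Q lam ρgen Hhat z = t ^ 2 * qf R Q lam ρgen Hhat g := by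
    rw [hzdef, qf_smul]; ring_nf
  have hzg : z ⬝ᵥ g = -t * (g ⬝ᵥ g) := by
    rw [hzdef, smul_dotProduct]; simp
  rw [hexp, hzq, hzg] at hlt
  have ht2 : t ^ 2 * qf R Q lam ρgen Hhat g = t * (g ⬝ᵥ g) := by
    rw [htdef]; field_simp
  rw [ht2] at hlt
  nlinarith [mul_pos ht hgg]



def Ray (P : Matrix (Fin a) (Fin a) ℝ) : Set ℝ :=
  {r : ℝ | ∃ x : Fin a → ℝ, ∑ i, x i ^ 2 = 1 ∧ r = x ⬝ᵥ P *ᵥ x}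

lemma abs_quad_le (P : Matrix (Fin a) (Fin a) ℝ) {x : Fin a → ℝ} (hx : ∑ i, x i ^ 2 = 1) :
    |x ⬝ᵥ P *ᵥ x| ≤ ∑ i, ∑ j, |P i j| := by
  have hxi : ∀ i, |x i| ≤ 1 := by
    intro i
    have h1 : x i ^ 2 ≤ 1 := by
      rw [← hx]
      exact Finset.single_le_sum (f := fun i => x i ^ 2) (fun j _ => sq_nonneg _) (Finset.mem_univ i)
    nlinarith [abs_nonneg (x i), sq_abs (x i)]
  have : x ⬝ᵥ P *ᵥ x = ∑ i, ∑ j, x i * (P i j * x j) := by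
    simp [dotProduct, mulVec, Finset.mul_sum]
  rw [this]
  refine (Finset.abs_sum_le_sum_abs _ _).trans ?_
  refine Finset.sum_le_sum fun i _ => ?_
  refine (Finset.abs_sum_le_sum_abs _ _).trans ?_
  refine Finset.sum_le_sum fun j _ => ?_
  rw [abs_mul, abs_mul]
  calc |x i| * (|P i j| * |x j|) ≤ 1 * (|P i j| * 1) := by
        apply mul_le_mul (hxi i) (by exact mul_le_mul_of_nonneg_left (hxi j) (abs_nonneg _))
          (by positivity) zero_le_one
    _ = |P i j| := by ring

lemma bddAbove_ray (P : Matrix (Fin a) (Fin a) ℝ) : BddAbove (Ray P) := by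
  refine ⟨∑ i, ∑ j, |P i j|, fun r hr => ?_⟩
  obtain ⟨x, hx, rfl⟩ := hr
  exact (le_abs_self _).trans (abs_quad_le P hx)

lemma bddBelow_ray (P : Matrix (Fin a) (Fin a) ℝ) : BddBelow (Ray P) := by
  refine ⟨-∑ i, ∑ j, |P i j|, fun r hr => ?_⟩
  obtain ⟨x, hx, rfl⟩ := hr
  exact neg_le_of_abs_le (abs_quad_le P hx)

lemma sum_sq_pos_of_ne {z : Fin a → ℝ} (hz : z ≠ 0) : 0 < ∑ i, z i ^ 2 := by
  rcases lt_or_eq_of_le (Finset.sum_nonneg fun i _ => sq_nonneg (z i)) with h | h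
  · exact h
  · exfalso
    apply hz
    funext i
    have := (Finset.sum_eq_zero_iff_of_nonneg fun j _ => sq_nonneg (z j)).mp h.symm i
      (Finset.mem_univ i)
    have := pow_eq_zero_iff (n := 2) (by norm_num) |>.mp this
    simpa using this

lemma mem_ray_of_ne (P : Matrix (Fin a) (Fin a) ℝ) {z : Fin a → ℝ} (hz : z ≠ 0) :
    (∑ i, z i ^ 2)⁻¹ * (z ⬝ᵥ P *ᵥ z) ∈ Ray P := by
  have ht : 0 < ∑ i, z i ^ 2 := sum_sq_pos_of_ne hz
  set t : ℝ := ∑ i, z i ^ 2 with htdef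
  refine ⟨(Real.sqrt t)⁻¹ • z, ?_, ?_⟩
  · have : ∀ i, ((Real.sqrt t)⁻¹ • z) i ^ 2 = (Real.sqrt t)⁻¹ ^ 2 * z i ^ 2 := by
      intro i; simp [mul_pow]
    rw [Finset.sum_congr rfl fun i _ => this i, ← Finset.mul_sum, ← htdef,
      ← Real.sqrt_inv, Real.sq_sqrt (by positivity)]
    field_simp
  · rw [smul_dotProduct, mulVec_smul, dotProduct_smul]
    rw [smul_eq_mul, smul_eq_mul, ← mul_assoc]
    congr 1
    rw [← Real.sqrt_inv, ← Real.sqrt_mul (by positivity), Real.sqrt_mul_self (by positivity)]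

lemma quad_le_eigMax (P : Matrix (Fin a) (Fin a) ℝ) (z : Fin a → ℝ) :
    z ⬝ᵥ P *ᵥ z ≤ eigMax P * ∑ i, z i ^ 2 := by
  by_cases hz : z = 0
  · simp [hz]
  · have ht : 0 < ∑ i, z i ^ 2 := sum_sq_pos_of_ne hz
    have h := le_csSup (bddAbove_ray P) (mem_ray_of_ne P hz)
    have : (∑ i, z i ^ 2)⁻¹ * (z ⬝ᵥ P *ᵥ z) ≤ eigMax P := h
    calc z ⬝ᵥ P *ᵥ z = ((∑ i, z i ^ 2)⁻¹ * (z ⬝ᵥ P *ᵥ z)) * ∑ i, z i ^ 2 := by field_simp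
      _ ≤ eigMax P * ∑ i, z i ^ 2 := mul_le_mul_of_nonneg_right this ht.le

lemma eigMin_le_quad (P : Matrix (Fin a) (Fin a) ℝ) (z : Fin a → ℝ) :
    eigMin P * ∑ i, z i ^ 2 ≤ z ⬝ᵥ P *ᵥ z := by
  by_cases hz : z = 0
  · simp [hz]
  · have ht : 0 < ∑ i, z i ^ 2 := sum_sq_pos_of_ne hz
    have h := csInf_le (bddBelow_ray P) (mem_ray_of_ne P hz)
    calc eigMin P * ∑ i, z i ^ 2 ≤ ((∑ i, z i ^ 2)⁻¹ * (z ⬝ᵥ P *ᵥ z)) * ∑ i, z i ^ 2 :=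
          mul_le_mul_of_nonneg_right h ht.le
      _ = z ⬝ᵥ P *ᵥ z := by field_simp






lemma ray_compact (P : Matrix (Fin a) (Fin a) ℝ) : IsCompact (Ray P) := by
  have hS : IsCompact {x : Fin a → ℝ | ∑ i, x i ^ 2 = 1} := by
    have hcl : IsClosed {x : Fin a → ℝ | ∑ i, x i ^ 2 = 1} :=
      isClosed_eq (by fun_prop) continuous_const
    refine (isCompact_closedBall (0 : Fin a → ℝ) 1).of_isClosed_subset hcl ?_
    intro x hx
    simp only [Metric.mem_closedBall, dist_zero_right]
    rcases isEmpty_or_nonempty (Fin a) with h | h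
    · exact absurd hx (by simp)
    refine (pi_norm_le_iff_of_nonneg zero_le_one).mpr fun i => ?_
    have h1 : x i ^ 2 ≤ 1 := by
      rw [← hx]
      exact Finset.single_le_sum (f := fun i => x i ^ 2) (fun j _ => sq_nonneg _) (Finset.mem_univ i)
    rw [Real.norm_eq_abs]
    nlinarith [abs_nonneg (x i), sq_abs (x i)]
  have : Ray P = (fun x : Fin a → ℝ => x ⬝ᵥ P *ᵥ x) '' {x | ∑ i, x i ^ 2 = 1} := by
    ext r; constructor
    · rintro ⟨x, hx, rfl⟩; exact ⟨x, hx, rfl⟩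
    · rintro ⟨x, hx, rfl⟩; exact ⟨x, hx, rfl⟩
  rw [this]
  refine hS.image ?_
  simp only [dotProduct, mulVec]
  fun_prop

lemma eigMin_pos {P : Matrix (Fin a) (Fin a) ℝ} (hP : P.PosDef) (z0 : Fin a → ℝ)
    (hz0 : z0 ≠ 0) : 0 < eigMin P := by
  have hne : (Ray P).Nonempty := ⟨_, mem_ray_of_ne P hz0⟩
  have hmem := (ray_compact P).sInf_mem hne
  obtain ⟨x, hx, hval⟩ := hmem
  rw [eigMin, ← Ray]
  rw [show sInf (Ray P) = x ⬝ᵥ P *ᵥ x from hval]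
  refine lt_of_lt_of_le (hP.dotProduct_mulVec_pos (x := x) ?_) (by simp)
  intro h; rw [h] at hx; simpa using hx


lemma det_one_sub_ne_zero {n : ℕ} (A : Matrix (Fin n) (Fin n) ℝ)
    (hA : spectralRadius ℂ (A.map Complex.ofReal) < 1) :
    IsUnit ((1 : Matrix (Fin n) (Fin n) ℝ) - A).det := by
  rw [isUnit_iff_ne_zero]
  intro hdet
  have h1 : ((1 : Matrix (Fin n) (Fin n) ℝ) - A).map Complex.ofReal
      = 1 - A.map Complex.ofReal := by
    ext i j
    simp [Matrix.map_apply, Matrix.one_apply, Matrix.sub_apply, apply_ite Complex.ofReal]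
  have hdetC : ((1 : Matrix (Fin n) (Fin n) ℂ) - A.map Complex.ofReal).det = 0 := by
    rw [← h1,
      show ((1 - A).map Complex.ofReal) = Complex.ofRealHom.mapMatrix (1 - A) from rfl,
      ← RingHom.map_det]
    simp [hdet]
  have hnu : ¬IsUnit ((1 : Matrix (Fin n) (Fin n) ℂ) - A.map Complex.ofReal) := by
    rw [Matrix.isUnit_iff_isUnit_det, isUnit_iff_ne_zero]
    simpa using hdetC
  have hmem : (1 : ℂ) ∈ spectrum ℂ (A.map Complex.ofReal) := by
    rw [spectrum.mem_iff]
    simpa using hnu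
  have hle : (1 : ENNReal) ≤ spectralRadius ℂ (A.map Complex.ofReal) := by
    have := le_iSup₂ (f := fun k (_ : k ∈ spectrum ℂ (A.map Complex.ofReal)) =>
      (‖k‖₊ : ENNReal)) 1 hmem
    simpa [spectralRadius] using this
  exact absurd hA (not_lt.mpr hle)




lemma symm_transpose {P : Matrix (Fin a) (Fin a) ℝ} (hP : P.IsHermitian) : Pᵀ = P := by
  exact (show P.IsSymm by simpa using hP)

open scoped MatrixOrder in
lemma exists_sqrt' {P : Matrix (Fin a) (Fin a) ℝ} (hP : P.PosSemidef) :
    ∃ S : Matrix (Fin a) (Fin a) ℝ, Sᵀ = S ∧ S * S = P := by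
  refine ⟨CFC.sqrt P, ?_, CFC.sqrt_mul_sqrt_self P hP.nonneg⟩
  have := (CFC.sqrt_nonneg P).isSelfAdjoint
  simpa [IsSelfAdjoint, Matrix.star_eq_conjTranspose] using this

end S9

noncomputable def Matrix.PosSemidef.sqrt {a : ℕ} {P : Matrix (Fin a) (Fin a) ℝ}
    (hP : P.PosSemidef) : Matrix (Fin a) (Fin a) ℝ :=
  Classical.choose (S9.exists_sqrt' hP)

lemma Matrix.PosSemidef.sqrt_transpose {a : ℕ} {P : Matrix (Fin a) (Fin a) ℝ}
    (hP : P.PosSemidef) : hP.sqrtᵀ = hP.sqrt :=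
  (Classical.choose_spec (S9.exists_sqrt' hP)).1

lemma Matrix.PosSemidef.sqrt_mul_self {a : ℕ} {P : Matrix (Fin a) (Fin a) ℝ}
    (hP : P.PosSemidef) : hP.sqrt * hP.sqrt = P :=
  (Classical.choose_spec (S9.exists_sqrt' hP)).2

namespace S9
open Matrix BigOperators

variable {a b c : ℕ}

lemma quad_sqrt {P : Matrix (Fin a) (Fin a) ℝ} (hP : P.PosSemidef) (v : Fin a → ℝ) :
    v ⬝ᵥ P *ᵥ v = ∑ i, (hP.sqrt *ᵥ v) i ^ 2 := by
  rw [← dotProduct_self_eq]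
  conv_lhs => rw [← hP.sqrt_mul_self]
  rw [← mulVec_mulVec, dotProduct_mulVec, ← mulVec_transpose,
    hP.sqrt_transpose]

lemma pnorm_eq_enorm {P : Matrix (Fin a) (Fin a) ℝ} (hP : P.PosSemidef) (v : Fin a → ℝ) :
    pnorm P v = _root_.enorm (hP.sqrt *ᵥ v) := by
  rw [pnorm, _root_.enorm, quad_sqrt hP]


lemma enorm_neg (v : Fin a → ℝ) : _root_.enorm (-v) = _root_.enorm v := by
  simp [_root_.enorm]

lemma pnorm_add_le {P : Matrix (Fin a) (Fin a) ℝ} (hP : P.PosSemidef) (v w : Fin a → ℝ) :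
    pnorm P (v + w) ≤ pnorm P v + pnorm P w := by
  rw [pnorm_eq_enorm hP, pnorm_eq_enorm hP, pnorm_eq_enorm hP, Matrix.mulVec_add]
  exact enorm_add_le _ _

lemma pnorm_smul {P : Matrix (Fin a) (Fin a) ℝ} (hP : P.PosSemidef) (c : ℝ) (v : Fin a → ℝ) :
    pnorm P (c • v) = |c| * pnorm P v := by
  rw [pnorm_eq_enorm hP, pnorm_eq_enorm hP, Matrix.mulVec_smul, enorm_smul]

lemma pnorm_neg {P : Matrix (Fin a) (Fin a) ℝ} (hP : P.PosSemidef) (v : Fin a → ℝ) :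
    pnorm P (-v) = pnorm P v := by
  rw [pnorm_eq_enorm hP, pnorm_eq_enorm hP, Matrix.mulVec_neg, enorm_neg]

lemma pnorm_le_sqrt_eigMax {P : Matrix (Fin a) (Fin a) ℝ} (hmax : 0 ≤ eigMax P)
    (v : Fin a → ℝ) : pnorm P v ≤ Real.sqrt (eigMax P) * _root_.enorm v := by
  rw [pnorm, _root_.enorm, ← Real.sqrt_mul hmax]
  exact Real.sqrt_le_sqrt (quad_le_eigMax P v)

lemma sqrt_eigMin_mul_le {P : Matrix (Fin a) (Fin a) ℝ} (hmin : 0 ≤ eigMin P)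
    (v : Fin a → ℝ) : Real.sqrt (eigMin P) * _root_.enorm v ≤ pnorm P v := by
  rw [pnorm, _root_.enorm, ← Real.sqrt_mul hmin]
  exact Real.sqrt_le_sqrt (eigMin_le_quad P v)

lemma enorm_le_pnorm_div {P : Matrix (Fin a) (Fin a) ℝ} (hmin : 0 < eigMin P)
    (v : Fin a → ℝ) : _root_.enorm v ≤ pnorm P v / Real.sqrt (eigMin P) := by
  rw [le_div_iff₀ (Real.sqrt_pos.mpr hmin)]
  calc _root_.enorm v * Real.sqrt (eigMin P) = Real.sqrt (eigMin P) * _root_.enorm v := by ring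
    _ ≤ pnorm P v := sqrt_eigMin_mul_le hmin.le v

lemma quad_conj (P A : Matrix (Fin a) (Fin a) ℝ) (z : Fin a → ℝ) :
    z ⬝ᵥ (Aᵀ * P * A) *ᵥ z = (A *ᵥ z) ⬝ᵥ P *ᵥ (A *ᵥ z) := by
  rw [Matrix.mul_assoc, ← Matrix.mulVec_mulVec, dotProduct_mulVec, vecMul_transpose,
    ← Matrix.mulVec_mulVec]

lemma pnorm_mv_le {P : Matrix (Fin a) (Fin a) ℝ} (hmax : 0 ≤ eigMax P)
    (M : Matrix (Fin a) (Fin b) ℝ) (v : Fin b → ℝ) :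
    pnorm P (M *ᵥ v) ≤ Real.sqrt (eigMax P) * (spec M * _root_.enorm v) :=
  (pnorm_le_sqrt_eigMax hmax _).trans
    (mul_le_mul_of_nonneg_left (enorm_mulVec_le M v) (Real.sqrt_nonneg _))

lemma gvec_eq {m p : ℕ} (R : Matrix (Fin m) (Fin m) ℝ) (Q : Matrix (Fin p) (Fin p) ℝ)
    (lam ρgen : ℝ) (Hhat : Matrix (Fin p) (Fin m) ℝ) (d rk : Fin p → ℝ) (w : Fin m → ℝ) :
    gvec R Q lam ρgen Hhat d rk w
      = (R + lam • (Hhatᵀ * Q * Hhat) + ρgen • (1 : Matrix (Fin m) (Fin m) ℝ)) *ᵥ w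
        + lam • ((Hhatᵀ * Q) *ᵥ (d - rk)) := by
  unfold gvec
  have h1 : Hhat *ᵥ w + d - rk = Hhat *ᵥ w + (d - rk) := by abel
  rw [h1]
  simp only [Matrix.add_mulVec, Matrix.smul_mulVec, Matrix.one_mulVec,
    Matrix.mulVec_add, ← Matrix.mulVec_mulVec, smul_add, Matrix.mul_assoc]
  abel

end S9

/-- Lemma 1 of the paper for the ℓ2-controller (11). -/
theorem stmt9 {n m p : ℕ}
    (A : Matrix (Fin n) (Fin n) ℝ) (B : Matrix (Fin n) (Fin m) ℝ) (C : Matrix (Fin p) (Fin n) ℝ)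
    (hA : spectralRadius ℂ (A.map Complex.ofReal) < 1)
    (Qbar P : Matrix (Fin n) (Fin n) ℝ) (hQbar : Qbar.PosDef) (hP : P.PosDef)
    (hLyap : Aᵀ * P * A - P + Qbar = 0)
    (R : Matrix (Fin m) (Fin m) ℝ) (Q : Matrix (Fin p) (Fin p) ℝ)
    (hR : R.PosSemidef) (hQ : Q.PosSemidef)
    (lam : ℝ) (hlam : 0 ≤ lam) (Hhat : Matrix (Fin p) (Fin m) ℝ)
    (r : ℕ → Fin p → ℝ) (η : ℝ) (hη : 0 < η) (ρgen : ℝ) (hρgen : 0 < ρgen)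
    (dx : ℕ → Fin n → ℝ) (dy : ℕ → Fin p → ℝ)
    (x : ℕ → Fin n → ℝ) (u : ℕ → Fin m → ℝ) (y : ℕ → Fin p → ℝ)
    (hdyn : ∀ k, x (k + 1) = A *ᵥ x k + B *ᵥ u k + dx k)
    (hout : ∀ k, y k = C *ᵥ x k + dy k)
    (hctrl : ∀ k, u (k + 1) =
      u k - (2 * η) • (R *ᵥ u k + lam • (Hhatᵀ *ᵥ (Q *ᵥ (y k - r k))) + ρgen • u k))
    (ustar : ℕ → Fin m → ℝ)
    (hustar : ∀ k, ∀ v : Fin m → ℝ, v ≠ ustar k →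
      Phi2 R Q lam ρgen Hhat (C *ᵥ ((1 - A)⁻¹ *ᵥ dx k) + dy k) (r k) (ustar k)
        < Phi2 R Q lam ρgen Hhat (C *ᵥ ((1 - A)⁻¹ *ᵥ dx k) + dy k) (r k) v)
    (H : Matrix (Fin p) (Fin m) ℝ) (hH : H = C * (1 - A)⁻¹ * B)
    (xss : ℕ → Fin n → ℝ) (hxss : ∀ k, xss k = (1 - A)⁻¹ *ᵥ (B *ᵥ u k + dx k))
    (γ c1 c2 c3 c4 : ℝ)
    (hγ : γ = eigMin Qbar / eigMax P)
    (hc1 : c1 = Real.sqrt (1 - γ) + 2 * η * lam * spec ((1 - A)⁻¹ * B) * spec (Hhatᵀ * Q)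
      * spec C * Real.sqrt (eigMax P) / Real.sqrt (eigMin P))
    (hc2 : c2 = Real.sqrt (eigMax P) * spec ((1 - A)⁻¹ * B)
      * spec ((2 : ℝ) • (R + lam • (Hhatᵀ * Q * Hhat) + ρgen • (1 : Matrix (Fin m) (Fin m) ℝ))))
    (hc3 : c3 = 2 * lam * Real.sqrt (eigMax P) * spec ((1 - A)⁻¹ * B) * spec (Hhatᵀ * Q))
    (hc4 : c4 = Real.sqrt (eigMax P) * spec ((1 - A)⁻¹)) :
    ∀ k : ℕ,
      pnorm P (x (k + 1) - xss (k + 1))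
        ≤ c1 * pnorm P (x k - xss k) + η * c2 * _root_.enorm (u k - ustar k)
          + η * c3 * spec (H - Hhat) * _root_.enorm (u k)
          + c4 * _root_.enorm (dx (k + 1) - dx k) := by
  intro k
  have hPsd := hP.posSemidef
  -- nonnegativity of the spectral quantities
  have hsG : 0 ≤ spec ((1 - A)⁻¹ * B) := S9.spec_nonneg _
  have hsHQ : 0 ≤ spec (Hhatᵀ * Q) := S9.spec_nonneg _
  have hsC : 0 ≤ spec C := S9.spec_nonneg _
  have hsHH : 0 ≤ spec (H - Hhat) := S9.spec_nonneg _
  have hsInv : 0 ≤ spec (1 - A)⁻¹ := S9.spec_nonneg _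
  have hemaxP : 0 ≤ Real.sqrt (eigMax P) := Real.sqrt_nonneg _
  rcases Nat.eq_zero_or_pos n with hn | hn
  · -- trivial case `n = 0`
    subst hn
    have hL : ∀ v : Fin 0 → ℝ, pnorm P v = 0 := by
      intro v; simp [pnorm, dotProduct]
    have hE : ∀ v : Fin 0 → ℝ, _root_.enorm v = 0 := by
      intro v; simp [_root_.enorm]
    rw [hL, hL, hE]
    have h2 : 0 ≤ η * c2 * _root_.enorm (u k - ustar k) := by
      rw [hc2]
      have := S9.spec_nonneg ((2 : ℝ) • (R + lam • (Hhatᵀ * Q * Hhat)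
        + ρgen • (1 : Matrix (Fin m) (Fin m) ℝ)))
      have := S9.enorm_nonneg (u k - ustar k)
      have := mul_nonneg (mul_nonneg hemaxP hsG) ‹0 ≤ spec ((2 : ℝ) • (R + lam • (Hhatᵀ * Q * Hhat)
        + ρgen • (1 : Matrix (Fin m) (Fin m) ℝ)))›
      positivity
    have h3 : 0 ≤ η * c3 * spec (H - Hhat) * _root_.enorm (u k) := by
      rw [hc3]
      have := S9.enorm_nonneg (u k)
      have h0 : 0 ≤ 2 * lam * Real.sqrt (eigMax P) * spec ((1 - A)⁻¹ * B) * spec (Hhatᵀ * Q) := by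
        positivity
      positivity
    nlinarith [h2, h3]
  · -- main case `1 ≤ n`
    -- a nonzero vector
    set i0 : Fin n := ⟨0, hn⟩ with hi0
    have hz0ne : (Pi.single i0 1 : Fin n → ℝ) ≠ 0 := by
      intro h
      have := congrFun h i0
      simp at this
    have hz0sum : ∑ i, (Pi.single i0 1 : Fin n → ℝ) i ^ 2 = 1 := by
      simp [Pi.single_apply]
    -- positivity of the eigenvalue quantities
    have hmaxP : 0 < eigMax P := by
      have hle := le_csSup (S9.bddAbove_ray P) (S9.mem_ray_of_ne P hz0ne)
      have hq : 0 < (Pi.single i0 1 : Fin n → ℝ) ⬝ᵥ P *ᵥ (Pi.single i0 1 : Fin n → ℝ) := by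
        simpa using hP.dotProduct_mulVec_pos hz0ne
      have ht : 0 < ∑ i, (Pi.single i0 1 : Fin n → ℝ) i ^ 2 := S9.sum_sq_pos_of_ne hz0ne
      have hpos : 0 < (∑ i, (Pi.single i0 1 : Fin n → ℝ) i ^ 2)⁻¹
          * ((Pi.single i0 1 : Fin n → ℝ) ⬝ᵥ P *ᵥ (Pi.single i0 1 : Fin n → ℝ)) := by positivity
      exact lt_of_lt_of_le hpos hle
    have hminP : 0 < eigMin P := S9.eigMin_pos hP _ hz0ne
    have hminQ : 0 < eigMin Qbar := S9.eigMin_pos hQbar _ hz0ne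
    have hγpos : 0 < γ := by rw [hγ]; positivity
    -- Qbar = P - AᵀPA
    have hQeq : Qbar = P - Aᵀ * P * A := by
      have h0 : Qbar = (Aᵀ * P * A - P + Qbar) + (P - Aᵀ * P * A) := by abel
      rw [h0, hLyap, zero_add]
    have hγ1 : γ ≤ 1 := by
      have h1 : eigMin Qbar ≤ (Pi.single i0 1 : Fin n → ℝ) ⬝ᵥ Qbar *ᵥ (Pi.single i0 1 : Fin n → ℝ) :=
        csInf_le (S9.bddBelow_ray Qbar) ⟨_, hz0sum, rfl⟩
      have h2 : (Pi.single i0 1 : Fin n → ℝ) ⬝ᵥ Qbar *ᵥ (Pi.single i0 1 : Fin n → ℝ) ≤ eigMax P := by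
        rw [hQeq, Matrix.sub_mulVec, dotProduct_sub, S9.quad_conj]
        have h3 : 0 ≤ (A *ᵥ (Pi.single i0 1 : Fin n → ℝ)) ⬝ᵥ P *ᵥ (A *ᵥ (Pi.single i0 1 : Fin n → ℝ)) := by
          simpa using hPsd.dotProduct_mulVec_nonneg _
        have h4 := S9.quad_le_eigMax P (Pi.single i0 1 : Fin n → ℝ)
        rw [hz0sum, mul_one] at h4
        linarith
      rw [hγ, div_le_one hmaxP]
      linarith
    have h1γ : 0 ≤ 1 - γ := by linarith
    set e : Fin n → ℝ := x k - xss k with he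
    -- the contraction bound
    have hq1 : (A *ᵥ e) ⬝ᵥ P *ᵥ (A *ᵥ e) = e ⬝ᵥ P *ᵥ e - e ⬝ᵥ Qbar *ᵥ e := by
      rw [hQeq, Matrix.sub_mulVec, dotProduct_sub, S9.quad_conj]
      ring
    have hq2 : γ * (e ⬝ᵥ P *ᵥ e) ≤ e ⬝ᵥ Qbar *ᵥ e := by
      have a1 := S9.eigMin_le_quad Qbar e
      have a2 := S9.quad_le_eigMax P e
      have a3 : γ * (e ⬝ᵥ P *ᵥ e) ≤ γ * (eigMax P * ∑ i, e i ^ 2) :=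
        mul_le_mul_of_nonneg_left a2 hγpos.le
      have a4 : γ * (eigMax P * ∑ i, e i ^ 2) = eigMin Qbar * ∑ i, e i ^ 2 := by
        rw [hγ]; field_simp
      linarith
    have hbound1 : pnorm P (A *ᵥ e) ≤ Real.sqrt (1 - γ) * pnorm P e := by
      rw [pnorm, pnorm, ← Real.sqrt_mul h1γ]
      apply Real.sqrt_le_sqrt
      have : (1 - γ) * (e ⬝ᵥ P *ᵥ e) = e ⬝ᵥ P *ᵥ e - γ * (e ⬝ᵥ P *ᵥ e) := by ring
      rw [this, hq1]
      linarith
    -- invertibility of 1 - A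
    have hdet : IsUnit ((1 : Matrix (Fin n) (Fin n) ℝ) - A).det := S9.det_one_sub_ne_zero A hA
    -- gradient structure of the controller
    set Mt : Matrix (Fin m) (Fin m) ℝ :=
      R + lam • (Hhatᵀ * Q * Hhat) + ρgen • (1 : Matrix (Fin m) (Fin m) ℝ) with hMtdef
    set wv : Fin m → ℝ := u k - ustar k with hwv
    have hg0 : S9.gvec R Q lam ρgen Hhat (C *ᵥ ((1 - A)⁻¹ *ᵥ dx k) + dy k) (r k) (ustar k) = 0 :=
      S9.grad_eq_zero hR hQ hlam hρgen Hhat _ _ (ustar k) (fun v hv => hustar k v hv)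
    have hgu : S9.gvec R Q lam ρgen Hhat (C *ᵥ ((1 - A)⁻¹ *ᵥ dx k) + dy k) (r k) (u k)
        = Mt *ᵥ wv := by
      have h1 := S9.gvec_eq R Q lam ρgen Hhat (C *ᵥ ((1 - A)⁻¹ *ᵥ dx k) + dy k) (r k) (u k)
      have h2 := S9.gvec_eq R Q lam ρgen Hhat (C *ᵥ ((1 - A)⁻¹ *ᵥ dx k) + dy k) (r k) (ustar k)
      rw [hg0] at h2
      have h3 : lam • ((Hhatᵀ * Q) *ᵥ ((C *ᵥ ((1 - A)⁻¹ *ᵥ dx k) + dy k) - r k))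
          = -(Mt *ᵥ ustar k) := by
        rw [← hMtdef] at h2
        exact eq_neg_of_add_eq_zero_right h2.symm
      rw [h1, ← hMtdef, h3, hwv, Matrix.mulVec_sub]
      abel
    have hCxss : C *ᵥ xss k = H *ᵥ u k + C *ᵥ ((1 - A)⁻¹ *ᵥ dx k) := by
      rw [hxss k, hH]
      simp only [Matrix.mulVec_add, Matrix.mulVec_mulVec, Matrix.mul_assoc]
    have hyk : y k - r k = (Hhat *ᵥ u k + (C *ᵥ ((1 - A)⁻¹ *ᵥ dx k) + dy k) - r k)
        + (C *ᵥ e + (H - Hhat) *ᵥ u k) := by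
      rw [hout k, he, Matrix.sub_mulVec, Matrix.mulVec_sub, hCxss]
      abel
    have hX : R *ᵥ u k + lam • (Hhatᵀ *ᵥ (Q *ᵥ (y k - r k))) + ρgen • u k
        = Mt *ᵥ wv + (lam • ((Hhatᵀ * Q) *ᵥ (C *ᵥ e))
          + lam • ((Hhatᵀ * Q) *ᵥ ((H - Hhat) *ᵥ u k))) := by
      rw [hyk, Matrix.mulVec_add Q, Matrix.mulVec_add Hhatᵀ, smul_add]
      have h1 : Hhatᵀ *ᵥ (Q *ᵥ (C *ᵥ e + (H - Hhat) *ᵥ u k))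
          = (Hhatᵀ * Q) *ᵥ (C *ᵥ e) + (Hhatᵀ * Q) *ᵥ ((H - Hhat) *ᵥ u k) := by
        simp only [Matrix.mulVec_add, Matrix.mulVec_mulVec, Matrix.mul_assoc]
      have h2 := hgu
      rw [S9.gvec] at h2
      rw [h1, smul_add, ← h2]
      simp only [Matrix.mulVec_mulVec, Matrix.mul_assoc]
      abel
    have hdu : u (k + 1) - u k
        = (-(2 * η)) • (Mt *ᵥ wv) + ((-(2 * η * lam)) • ((Hhatᵀ * Q) *ᵥ (C *ᵥ e))
          + (-(2 * η * lam)) • ((Hhatᵀ * Q) *ᵥ ((H - Hhat) *ᵥ u k))) := by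
      rw [hctrl k, hX]
      module
    -- state recursion
    have h1A : (1 - A) *ᵥ xss k = B *ᵥ u k + dx k := by
      rw [hxss k, Matrix.mulVec_mulVec, Matrix.mul_nonsing_inv _ hdet, Matrix.one_mulVec]
    have hstep : x (k + 1) - xss k = A *ᵥ e := by
      rw [hdyn k, he, Matrix.mulVec_sub]
      rw [Matrix.sub_mulVec, Matrix.one_mulVec] at h1A
      have h2 : B *ᵥ u k + dx k = xss k - A *ᵥ xss k := h1A.symm
      rw [add_assoc, h2]
      abel
    have hxssstep : xss (k + 1) - xss k
        = (1 - A)⁻¹ *ᵥ (B *ᵥ (u (k + 1) - u k)) + (1 - A)⁻¹ *ᵥ (dx (k + 1) - dx k) := by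
      rw [hxss (k + 1), hxss k, ← Matrix.mulVec_sub ((1 - A)⁻¹), ← Matrix.mulVec_add ((1 - A)⁻¹),
        Matrix.mulVec_sub B]
      congr 1
      abel
    have hmain : x (k + 1) - xss (k + 1)
        = A *ᵥ e + η • (((1 - A)⁻¹ * B) *ᵥ (((2 : ℝ) • Mt) *ᵥ wv))
          + (2 * η * lam) • (((1 - A)⁻¹ * B) *ᵥ ((Hhatᵀ * Q) *ᵥ (C *ᵥ e)))
          + (2 * η * lam) • (((1 - A)⁻¹ * B) *ᵥ ((Hhatᵀ * Q) *ᵥ ((H - Hhat) *ᵥ u k)))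
          + -((1 - A)⁻¹ *ᵥ (dx (k + 1) - dx k)) := by
      have h0 : x (k + 1) - xss (k + 1) = (x (k + 1) - xss k) - (xss (k + 1) - xss k) := by abel
      rw [h0, hstep, hxssstep, hdu]
      simp only [← Matrix.mulVec_mulVec, Matrix.mulVec_add, Matrix.mulVec_smul,
        Matrix.smul_mulVec]
      module
    -- the five bounds
    have hb1 : pnorm P (A *ᵥ e) ≤ Real.sqrt (1 - γ) * pnorm P e := hbound1
    have hb2 : pnorm P (η • (((1 - A)⁻¹ * B) *ᵥ (((2 : ℝ) • Mt) *ᵥ wv)))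
        ≤ η * (Real.sqrt (eigMax P) * (spec ((1 - A)⁻¹ * B) * (spec ((2 : ℝ) • Mt) * _root_.enorm wv)))
        := by
      rw [S9.pnorm_smul hPsd, abs_of_pos hη]
      refine mul_le_mul_of_nonneg_left ?_ hη.le
      refine (S9.pnorm_mv_le hmaxP.le _ _).trans ?_
      refine mul_le_mul_of_nonneg_left ?_ hemaxP
      exact mul_le_mul_of_nonneg_left (S9.enorm_mulVec_le _ _) hsG
    have hb3 : pnorm P ((2 * η * lam) • (((1 - A)⁻¹ * B) *ᵥ ((Hhatᵀ * Q) *ᵥ (C *ᵥ e))))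
        ≤ (2 * η * lam) * (Real.sqrt (eigMax P) * (spec ((1 - A)⁻¹ * B)
          * (spec (Hhatᵀ * Q) * (spec C * (pnorm P e / Real.sqrt (eigMin P)))))) := by
      rw [S9.pnorm_smul hPsd, abs_of_nonneg (by positivity)]
      refine mul_le_mul_of_nonneg_left ?_ (by positivity)
      refine (S9.pnorm_mv_le hmaxP.le _ _).trans ?_
      refine mul_le_mul_of_nonneg_left ?_ hemaxP
      refine mul_le_mul_of_nonneg_left ?_ hsG
      refine (S9.enorm_mulVec_le _ _).trans ?_
      refine mul_le_mul_of_nonneg_left ?_ hsHQ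
      refine (S9.enorm_mulVec_le _ _).trans ?_
      exact mul_le_mul_of_nonneg_left (S9.enorm_le_pnorm_div hminP e) hsC
    have hb4 : pnorm P ((2 * η * lam) • (((1 - A)⁻¹ * B) *ᵥ ((Hhatᵀ * Q) *ᵥ ((H - Hhat) *ᵥ u k))))
        ≤ (2 * η * lam) * (Real.sqrt (eigMax P) * (spec ((1 - A)⁻¹ * B)
          * (spec (Hhatᵀ * Q) * (spec (H - Hhat) * _root_.enorm (u k))))) := by
      rw [S9.pnorm_smul hPsd, abs_of_nonneg (by positivity)]
      refine mul_le_mul_of_nonneg_left ?_ (by positivity)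
      refine (S9.pnorm_mv_le hmaxP.le _ _).trans ?_
      refine mul_le_mul_of_nonneg_left ?_ hemaxP
      refine mul_le_mul_of_nonneg_left ?_ hsG
      refine (S9.enorm_mulVec_le _ _).trans ?_
      exact mul_le_mul_of_nonneg_left (S9.enorm_mulVec_le _ _) hsHQ
    have hb5 : pnorm P (-((1 - A)⁻¹ *ᵥ (dx (k + 1) - dx k)))
        ≤ Real.sqrt (eigMax P) * (spec (1 - A)⁻¹ * _root_.enorm (dx (k + 1) - dx k)) := by
      rw [S9.pnorm_neg hPsd]
      exact S9.pnorm_mv_le hmaxP.le _ _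
    -- assembling
    have tri : pnorm P (x (k + 1) - xss (k + 1))
        ≤ pnorm P (A *ᵥ e) + pnorm P (η • (((1 - A)⁻¹ * B) *ᵥ (((2 : ℝ) • Mt) *ᵥ wv)))
          + pnorm P ((2 * η * lam) • (((1 - A)⁻¹ * B) *ᵥ ((Hhatᵀ * Q) *ᵥ (C *ᵥ e))))
          + pnorm P ((2 * η * lam) • (((1 - A)⁻¹ * B) *ᵥ ((Hhatᵀ * Q) *ᵥ ((H - Hhat) *ᵥ u k))))
          + pnorm P (-((1 - A)⁻¹ *ᵥ (dx (k + 1) - dx k))) := by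
      rw [hmain]
      refine (S9.pnorm_add_le hPsd _ _).trans (add_le_add_left ?_ _)
      refine (S9.pnorm_add_le hPsd _ _).trans (add_le_add_left ?_ _)
      refine (S9.pnorm_add_le hPsd _ _).trans (add_le_add_left ?_ _)
      exact S9.pnorm_add_le hPsd _ _
    refine le_trans tri ?_
    have hsum := add_le_add (add_le_add (add_le_add (add_le_add hb1 hb2) hb3) hb4) hb5
    refine le_trans hsum (le_of_eq ?_)
    rw [hc1, hc2, hc3, hc4]
    ring
end

section
/- Consider the interconnection of the plant with the ℓ1-controller. Then for every k ≥ 0, ‖x_{k+1} − x_{ss,k+1}‖_P ≤ c1·‖x_k − x_{ss,k}‖_P + η·c2·‖u_k − u_k*‖ + η·c3·‖H − Ĥ‖·‖u_k‖ + c4·‖d_{x,k+1} − d_{x,k}‖ + η·c5, where c1 = √(1−γ) + 2ηλ‖(I−A)^{-1}B‖·‖ĤᵀQ‖·‖C‖·√(λ_max(P))/√(λ_min(P)), c2 = √(λ_max(P))·‖(I−A)^{-1}B‖·‖2(R + λĤᵀQĤ)‖, c3 = 2λ√(λ_max(P))·‖(I−A)^{-1}B‖·‖ĤᵀQ‖,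 c4 = √(λ_max(P))·‖(I−A)^{-1}‖, and c5 = 2√(λ_max(P))·‖(I−A)^{-1}B‖·‖ρ_col‖. -/
open Matrix BigOperators

/-- Euclidean norm of a vector in `ℝ^a`. -/
noncomputable def vecNorm {a : ℕ} (x : Fin a → ℝ) : ℝ := Real.sqrt (∑ i, x i ^ 2)

/-- Soft-thresholding: the proximal operator of `v ↦ η ρᵀ|v|`. -/
noncomputable def softThreshold {a : ℕ} (η : ℝ) (ρ : Fin a → ℝ) (v : Fin a → ℝ) :
    Fin a → ℝ :=
  fun i => Real.sign (v i) * max (|v i| - η * ρ i) 0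

/-- The ℓ1-regularized objective
`Φ_{ℓ1,k}(v) = vᵀRv + λ(Ĥv + d − r)ᵀQ(Ĥv + d − r) + ∑ i, ρ_i |v_i|`. -/
noncomputable def Phi1 {m p : ℕ} (R : Matrix (Fin m) (Fin m) ℝ) (Q : Matrix (Fin p) (Fin p) ℝ)
    (lam : ℝ) (ρcol : Fin m → ℝ) (Hhat : Matrix (Fin p) (Fin m) ℝ) (d rk : Fin p → ℝ)
    (v : Fin m → ℝ) : ℝ :=
  v ⬝ᵥ R *ᵥ v + lam * ((Hhat *ᵥ v + d - rk) ⬝ᵥ Q *ᵥ (Hhat *ᵥ v + d - rk))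
    + ∑ i, ρcol i * |v i|

lemma vecNorm_eq {a : ℕ} (x : Fin a → ℝ) :
    vecNorm x = ‖(WithLp.equiv 2 (Fin a → ℝ)).symm x‖ := by
  rw [EuclideanSpace.norm_eq, vecNorm]
  congr 1; apply Finset.sum_congr rfl; intro i _
  rw [Real.norm_eq_abs, sq_abs]; rfl

lemma vecNorm_nonneg {a : ℕ} (x : Fin a → ℝ) : 0 ≤ vecNorm x := Real.sqrt_nonneg _

lemma vecNorm_add_le {a : ℕ} (x y : Fin a → ℝ) : vecNorm (x + y) ≤ vecNorm x + vecNorm y := by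
  simp only [vecNorm_eq]
  have : (WithLp.equiv 2 (Fin a → ℝ)).symm (x + y)
      = (WithLp.equiv 2 (Fin a → ℝ)).symm x + (WithLp.equiv 2 (Fin a → ℝ)).symm y := rfl
  rw [this]; exact norm_add_le _ _

lemma vecNorm_neg {a : ℕ} (x : Fin a → ℝ) : vecNorm (-x) = vecNorm x := by
  simp [vecNorm, neg_sq]

lemma spec_nonneg {a b : ℕ} (M : Matrix (Fin a) (Fin b) ℝ) : 0 ≤ spec M := norm_nonneg _

lemma vecNorm_mulVec_le {a b : ℕ} (M : Matrix (Fin a) (Fin b) ℝ) (x : Fin b → ℝ) :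
    vecNorm (M *ᵥ x) ≤ spec M * vecNorm x := by
  have h := (LinearMap.toContinuousLinearMap (Matrix.toEuclideanLin M)).le_opNorm
    ((WithLp.equiv 2 (Fin b → ℝ)).symm x)
  simpa [vecNorm_eq, spec, Matrix.toEuclideanLin_apply] using h

lemma dot_le_vecNorm_mul {a : ℕ} (x y : Fin a → ℝ) : x ⬝ᵥ y ≤ vecNorm x * vecNorm y := by
  have h := real_inner_le_norm ((WithLp.equiv 2 (Fin a → ℝ)).symm x)
    ((WithLp.equiv 2 (Fin a → ℝ)).symm y)
  have h2 : (inner ℝ ((WithLp.equiv 2 (Fin a → ℝ)).symm x) ((WithLp.equiv 2 (Fin a → ℝ)).symm y) : ℝ) = x ⬝ᵥ y := by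
    simp [PiLp.inner_apply, dotProduct, mul_comm]
  rw [h2, ← vecNorm_eq, ← vecNorm_eq] at h; exact h

lemma vecNorm_smul {a : ℕ} (c : ℝ) (x : Fin a → ℝ) : vecNorm (c • x) = |c| * vecNorm x := by
  simp only [vecNorm, Pi.smul_apply, smul_eq_mul, mul_pow, ← Finset.mul_sum]
  rw [Real.sqrt_mul (sq_nonneg c), Real.sqrt_sq_eq_abs]

lemma vecNorm_mono {a : ℕ} (x y : Fin a → ℝ) (h : ∀ i, |x i| ≤ |y i|) :
    vecNorm x ≤ vecNorm y := by
  apply Real.sqrt_le_sqrt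
  apply Finset.sum_le_sum
  intro i _
  rw [← sq_abs (x i), ← sq_abs (y i)]
  exact pow_le_pow_left₀ (abs_nonneg _) (h i) 2

lemma vecNorm_sub_rev {a : ℕ} (x y : Fin a → ℝ) : vecNorm (x - y) = vecNorm (y - x) := by
  rw [← vecNorm_neg (y - x), neg_sub]

-- Rayleigh set facts
lemma rayleigh_bddAbove {a : ℕ} (P : Matrix (Fin a) (Fin a) ℝ) :
    BddAbove {r : ℝ | ∃ x : Fin a → ℝ, ∑ i, x i ^ 2 = 1 ∧ r = x ⬝ᵥ P *ᵥ x} := by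
  refine ⟨spec P, ?_⟩
  rintro r ⟨x, hx, rfl⟩
  have hxn : vecNorm x = 1 := by rw [vecNorm, hx, Real.sqrt_one]
  calc x ⬝ᵥ P *ᵥ x ≤ vecNorm x * vecNorm (P *ᵥ x) := dot_le_vecNorm_mul _ _
    _ ≤ vecNorm x * (spec P * vecNorm x) := by
        apply mul_le_mul_of_nonneg_left (vecNorm_mulVec_le _ _) (vecNorm_nonneg _)
    _ = spec P := by rw [hxn]; ring

lemma rayleigh_le_eigMax {a : ℕ} (P : Matrix (Fin a) (Fin a) ℝ) (x : Fin a → ℝ)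
    (hx : ∑ i, x i ^ 2 = 1) : x ⬝ᵥ P *ᵥ x ≤ eigMax P :=
  le_csSup (rayleigh_bddAbove P) ⟨x, hx, rfl⟩

lemma quadform_le_eigMax {a : ℕ} (P : Matrix (Fin a) (Fin a) ℝ) (x : Fin a → ℝ) :
    x ⬝ᵥ P *ᵥ x ≤ eigMax P * (∑ i, x i ^ 2) := by
  rcases eq_or_ne x 0 with rfl | hx0
  · simp
  · have hs : 0 < ∑ i, x i ^ 2 := by
      have : ∃ i, x i ≠ 0 := by
        by_contra h; push_neg at h; exact hx0 (funext h)
      obtain ⟨i, hi⟩ := this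
      exact Finset.sum_pos' (fun j _ => sq_nonneg _) ⟨i, Finset.mem_univ i, by positivity⟩
    set c : ℝ := Real.sqrt (∑ i, x i ^ 2) with hc
    have hcpos : 0 < c := Real.sqrt_pos.2 hs
    have key : (c⁻¹ • x) ⬝ᵥ P *ᵥ (c⁻¹ • x) ≤ eigMax P := by
      apply rayleigh_le_eigMax
      simp only [Pi.smul_apply, smul_eq_mul, mul_pow, ← Finset.mul_sum]
      rw [inv_pow, Real.sq_sqrt hs.le]
      field_simp
    have expand : (c⁻¹ • x) ⬝ᵥ P *ᵥ (c⁻¹ • x) = c⁻¹ ^ 2 * (x ⬝ᵥ P *ᵥ x) := by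
      rw [Matrix.mulVec_smul, dotProduct_smul, smul_dotProduct]
      simp [smul_eq_mul]; ring
    rw [expand] at key
    have := mul_le_mul_of_nonneg_left key (le_of_lt (by positivity : (0:ℝ) < c ^ 2))
    rw [← mul_assoc] at this
    have hcc : c ^ 2 * c⁻¹ ^ 2 = 1 := by field_simp
    rw [hcc, one_mul] at this
    calc x ⬝ᵥ P *ᵥ x ≤ c ^ 2 * eigMax P := this
      _ = eigMax P * (∑ i, x i ^ 2) := by rw [hc, Real.sq_sqrt hs.le]; ring

lemma rayleigh_bddBelow_psd {a : ℕ} {P : Matrix (Fin a) (Fin a) ℝ} (hP : P.PosSemidef) :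
    BddBelow {r : ℝ | ∃ x : Fin a → ℝ, ∑ i, x i ^ 2 = 1 ∧ r = x ⬝ᵥ P *ᵥ x} := by
  refine ⟨0, ?_⟩
  rintro r ⟨x, hx, rfl⟩
  simpa using hP.dotProduct_mulVec_nonneg x

lemma eigMin_le_rayleigh {a : ℕ} {P : Matrix (Fin a) (Fin a) ℝ} (hP : P.PosSemidef)
    (x : Fin a → ℝ) (hx : ∑ i, x i ^ 2 = 1) : eigMin P ≤ x ⬝ᵥ P *ᵥ x :=
  csInf_le (rayleigh_bddBelow_psd hP) ⟨x, hx, rfl⟩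

lemma eigMin_nonneg {a : ℕ} {P : Matrix (Fin a) (Fin a) ℝ} (hP : P.PosSemidef) :
    0 ≤ eigMin P := by
  rcases Set.eq_empty_or_nonempty
    {r : ℝ | ∃ x : Fin a → ℝ, ∑ i, x i ^ 2 = 1 ∧ r = x ⬝ᵥ P *ᵥ x} with h | h
  · rw [eigMin, h, Real.sInf_empty]
  · apply le_csInf h
    rintro r ⟨x, hx, rfl⟩
    simpa using hP.dotProduct_mulVec_nonneg x

lemma eigMin_mul_le_quadform {a : ℕ} {P : Matrix (Fin a) (Fin a) ℝ} (hP : P.PosSemidef)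
    (x : Fin a → ℝ) : eigMin P * (∑ i, x i ^ 2) ≤ x ⬝ᵥ P *ᵥ x := by
  rcases eq_or_ne x 0 with rfl | hx0
  · simp
  · have hs : 0 < ∑ i, x i ^ 2 := by
      have : ∃ i, x i ≠ 0 := by
        by_contra h; push_neg at h; exact hx0 (funext h)
      obtain ⟨i, hi⟩ := this
      exact Finset.sum_pos' (fun j _ => sq_nonneg _) ⟨i, Finset.mem_univ i, by positivity⟩
    set c : ℝ := Real.sqrt (∑ i, x i ^ 2) with hc
    have hcpos : 0 < c := Real.sqrt_pos.2 hs
    have key : eigMin P ≤ (c⁻¹ • x) ⬝ᵥ P *ᵥ (c⁻¹ • x) := by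
      apply eigMin_le_rayleigh hP
      simp only [Pi.smul_apply, smul_eq_mul, mul_pow, ← Finset.mul_sum]
      rw [inv_pow, Real.sq_sqrt hs.le]
      field_simp
    have expand : (c⁻¹ • x) ⬝ᵥ P *ᵥ (c⁻¹ • x) = c⁻¹ ^ 2 * (x ⬝ᵥ P *ᵥ x) := by
      rw [Matrix.mulVec_smul, dotProduct_smul, smul_dotProduct]
      simp [smul_eq_mul]; ring
    rw [expand] at key
    have := mul_le_mul_of_nonneg_left key (le_of_lt (by positivity : (0:ℝ) < c ^ 2))
    rw [hc, Real.sq_sqrt hs.le] at this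
    calc eigMin P * (∑ i, x i ^ 2) = (∑ i, x i ^ 2) * eigMin P := mul_comm _ _
      _ ≤ (∑ i, x i ^ 2) * ((Real.sqrt (∑ i, x i ^ 2))⁻¹ ^ 2 * (x ⬝ᵥ P *ᵥ x)) := by
          exact this
      _ = x ⬝ᵥ P *ᵥ x := by
          rw [inv_pow, Real.sq_sqrt hs.le]
          field_simp

lemma sphere_compact {a : ℕ} :
    IsCompact {x : Fin a → ℝ | ∑ i, x i ^ 2 = 1} := by
  apply Metric.isCompact_of_isClosed_isBounded
  · have : Continuous (fun x : Fin a → ℝ => ∑ i, x i ^ 2) := by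
      apply continuous_finset_sum
      intro i _
      exact (continuous_apply i).pow 2
    exact isClosed_eq this continuous_const
  · apply Metric.isBounded_iff_subset_closedBall (0 : Fin a → ℝ) |>.2
    refine ⟨1, ?_⟩
    intro x hx
    simp only [Set.mem_setOf_eq] at hx
    simp only [Metric.mem_closedBall, dist_zero_right]
    rw [pi_norm_le_iff_of_nonneg (by norm_num : (0:ℝ) ≤ 1)]
    intro i
    rw [Real.norm_eq_abs, ← Real.sqrt_one, ← Real.sqrt_sq_eq_abs]
    apply Real.sqrt_le_sqrt
    rw [← hx]
    exact Finset.single_le_sum (fun j _ => sq_nonneg (x j)) (Finset.mem_univ i)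

lemma quadform_continuous {a : ℕ} (P : Matrix (Fin a) (Fin a) ℝ) :
    Continuous (fun x : Fin a → ℝ => x ⬝ᵥ P *ᵥ x) := by
  apply continuous_finset_sum
  intro i _
  apply Continuous.mul (continuous_apply i)
  have : (fun x : Fin a → ℝ => (P *ᵥ x) i) = fun x => ∑ j, P i j * x j := by
    funext x; rfl
  rw [this]
  apply continuous_finset_sum
  intro j _
  exact continuous_const.mul (continuous_apply j)

lemma eigMin_pos {a : ℕ} [NeZero a] {P : Matrix (Fin a) (Fin a) ℝ} (hP : P.PosDef) :
    0 < eigMin P := by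
  have hne : ({x : Fin a → ℝ | ∑ i, x i ^ 2 = 1}).Nonempty := by
    refine ⟨Pi.single 0 1, ?_⟩
    simp [Pi.single_apply, Finset.sum_ite_eq']
  obtain ⟨x₀, hx₀, hmin⟩ := sphere_compact.exists_isMinOn hne
    (quadform_continuous P).continuousOn
  rw [isMinOn_iff] at hmin
  have hx₀ne : x₀ ≠ 0 := by
    intro h
    rw [h] at hx₀
    simp at hx₀
  have hpos : 0 < x₀ ⬝ᵥ P *ᵥ x₀ := by simpa using hP.dotProduct_mulVec_pos hx₀ne
  have : eigMin P = sInf {r : ℝ | ∃ x : Fin a → ℝ, ∑ i, x i ^ 2 = 1 ∧ r = x ⬝ᵥ P *ᵥ x} := rfl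
  rw [this]
  apply lt_of_lt_of_le hpos
  have hne' : Set.Nonempty {r : ℝ | ∃ x : Fin a → ℝ, ∑ i, x i ^ 2 = 1 ∧ r = x ⬝ᵥ P *ᵥ x} :=
    ⟨x₀ ⬝ᵥ P *ᵥ x₀, ⟨x₀, hx₀, rfl⟩⟩
  apply le_csInf hne'
  rintro r ⟨y, hy, rfl⟩
  exact hmin _ hy

lemma eigMax_pos {a : ℕ} [NeZero a] {P : Matrix (Fin a) (Fin a) ℝ} (hP : P.PosDef) :
    0 < eigMax P := by
  set x₀ : Fin a → ℝ := Pi.single 0 1 with hx₀def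
  have hx₀ : ∑ i, x₀ i ^ 2 = 1 := by
    simp [hx₀def, Pi.single_apply, Finset.sum_ite_eq']
  have hx₀ne : x₀ ≠ 0 := by
    intro h
    rw [h] at hx₀; simp at hx₀
  have hpos : 0 < x₀ ⬝ᵥ P *ᵥ x₀ := by simpa using hP.dotProduct_mulVec_pos hx₀ne
  exact lt_of_lt_of_le hpos (rayleigh_le_eigMax P x₀ hx₀)

lemma transpose_eq_of_hermitian {a : ℕ} {P : Matrix (Fin a) (Fin a) ℝ}
    (h : P.IsHermitian) : Pᵀ = P := by
  have := h.eq
  rwa [Matrix.conjTranspose] at this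
  
lemma quad_symm {a : ℕ} {P : Matrix (Fin a) (Fin a) ℝ} (hP : Pᵀ = P)
    (x y : Fin a → ℝ) : x ⬝ᵥ P *ᵥ y = y ⬝ᵥ P *ᵥ x := by
  rw [Matrix.dotProduct_mulVec, ← Matrix.mulVec_transpose, hP, dotProduct_comm]

lemma quad_cs {a : ℕ} {P : Matrix (Fin a) (Fin a) ℝ} (hP : P.PosSemidef)
    (x y : Fin a → ℝ) : (x ⬝ᵥ P *ᵥ y) ^ 2 ≤ (x ⬝ᵥ P *ᵥ x) * (y ⬝ᵥ P *ᵥ y) := by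
  have hsym := transpose_eq_of_hermitian hP.1
  have key : ∀ t : ℝ, 0 ≤ (y ⬝ᵥ P *ᵥ y) * (t * t) + (2 * (x ⬝ᵥ P *ᵥ y)) * t + (x ⬝ᵥ P *ᵥ x) := by
    intro t
    have h0 := hP.dotProduct_mulVec_nonneg (x + t • y)
    simp only [star_trivial] at h0
    have expand : (x + t • y) ⬝ᵥ P *ᵥ (x + t • y)
        = (y ⬝ᵥ P *ᵥ y) * (t * t) + (2 * (x ⬝ᵥ P *ᵥ y)) * t + (x ⬝ᵥ P *ᵥ x) := by
      rw [Matrix.mulVec_add, add_dotProduct, dotProduct_add,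
        dotProduct_add, Matrix.mulVec_smul, dotProduct_smul,
        smul_dotProduct, smul_dotProduct, dotProduct_smul,
        quad_symm hsym y x]
      simp only [smul_eq_mul]; ring
    rw [expand] at h0
    exact h0
  have hd := discrim_le_zero key
  rw [discrim] at hd
  nlinarith [hd]

lemma pnorm_nonneg {a : ℕ} (P : Matrix (Fin a) (Fin a) ℝ) (x : Fin a → ℝ) :
    0 ≤ pnorm P x := Real.sqrt_nonneg _

lemma pnorm_add_le {a : ℕ} {P : Matrix (Fin a) (Fin a) ℝ} (hP : P.PosSemidef)
    (x y : Fin a → ℝ) : pnorm P (x + y) ≤ pnorm P x + pnorm P y := by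
  have hsym := transpose_eq_of_hermitian hP.1
  rw [pnorm, pnorm, pnorm]
  have hx := hP.dotProduct_mulVec_nonneg x
  have hy := hP.dotProduct_mulVec_nonneg y
  simp only [star_trivial] at hx hy
  have hx' : 0 ≤ x ⬝ᵥ P *ᵥ x := by simpa using hP.dotProduct_mulVec_nonneg x
  have hy' : 0 ≤ y ⬝ᵥ P *ᵥ y := by simpa using hP.dotProduct_mulVec_nonneg y
  have hcs : x ⬝ᵥ P *ᵥ y ≤ Real.sqrt (x ⬝ᵥ P *ᵥ x) * Real.sqrt (y ⬝ᵥ P *ᵥ y) := by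
    have h1 := quad_cs hP x y
    have h2 : |x ⬝ᵥ P *ᵥ y| ≤ Real.sqrt ((x ⬝ᵥ P *ᵥ x) * (y ⬝ᵥ P *ᵥ y)) := by
      rw [← Real.sqrt_sq_eq_abs]
      exact Real.sqrt_le_sqrt h1
    calc x ⬝ᵥ P *ᵥ y ≤ |x ⬝ᵥ P *ᵥ y| := le_abs_self _
      _ ≤ Real.sqrt ((x ⬝ᵥ P *ᵥ x) * (y ⬝ᵥ P *ᵥ y)) := h2
      _ = Real.sqrt (x ⬝ᵥ P *ᵥ x) * Real.sqrt (y ⬝ᵥ P *ᵥ y) := Real.sqrt_mul hx' _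
  have expand : (x + y) ⬝ᵥ P *ᵥ (x + y)
      = x ⬝ᵥ P *ᵥ x + 2 * (x ⬝ᵥ P *ᵥ y) + y ⬝ᵥ P *ᵥ y := by
    rw [Matrix.mulVec_add, add_dotProduct, dotProduct_add,
      dotProduct_add, quad_symm hsym y x]
    ring
  rw [expand]
  have goal2 : x ⬝ᵥ P *ᵥ x + 2 * (x ⬝ᵥ P *ᵥ y) + y ⬝ᵥ P *ᵥ y
      ≤ (Real.sqrt (x ⬝ᵥ P *ᵥ x) + Real.sqrt (y ⬝ᵥ P *ᵥ y)) ^ 2 := by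
    rw [add_sq]
    have hxs : Real.sqrt (x ⬝ᵥ P *ᵥ x) ^ 2 = x ⬝ᵥ P *ᵥ x := Real.sq_sqrt hx'
    have hys : Real.sqrt (y ⬝ᵥ P *ᵥ y) ^ 2 = y ⬝ᵥ P *ᵥ y := Real.sq_sqrt hy'
    rw [hxs, hys]
    nlinarith [hcs]
  calc Real.sqrt (x ⬝ᵥ P *ᵥ x + 2 * (x ⬝ᵥ P *ᵥ y) + y ⬝ᵥ P *ᵥ y)
      ≤ Real.sqrt ((Real.sqrt (x ⬝ᵥ P *ᵥ x) + Real.sqrt (y ⬝ᵥ P *ᵥ y)) ^ 2) :=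
        Real.sqrt_le_sqrt goal2
    _ = Real.sqrt (x ⬝ᵥ P *ᵥ x) + Real.sqrt (y ⬝ᵥ P *ᵥ y) := by
        rw [Real.sqrt_sq (by positivity)]

lemma eigMax_nonneg {a : ℕ} {P : Matrix (Fin a) (Fin a) ℝ} (hP : P.PosSemidef) :
    0 ≤ eigMax P := by
  rcases Set.eq_empty_or_nonempty
    {r : ℝ | ∃ x : Fin a → ℝ, ∑ i, x i ^ 2 = 1 ∧ r = x ⬝ᵥ P *ᵥ x} with h | h
  · rw [eigMax, h, Real.sSup_empty]
  · obtain ⟨r, x, hx, rfl⟩ := h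
    have h1 : 0 ≤ x ⬝ᵥ P *ᵥ x := by simpa using hP.dotProduct_mulVec_nonneg x
    exact le_trans h1 (rayleigh_le_eigMax P x hx)

lemma pnorm_le_sqrt_eigMax_vecNorm {a : ℕ} {P : Matrix (Fin a) (Fin a) ℝ} (hP : P.PosSemidef)
    (x : Fin a → ℝ) : pnorm P x ≤ Real.sqrt (eigMax P) * vecNorm x := by
  rw [pnorm, vecNorm, ← Real.sqrt_mul (eigMax_nonneg hP)]
  apply Real.sqrt_le_sqrt
  exact quadform_le_eigMax P x

lemma sqrt_eigMin_vecNorm_le_pnorm {a : ℕ} {P : Matrix (Fin a) (Fin a) ℝ} (hP : P.PosSemidef)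
    (x : Fin a → ℝ) : Real.sqrt (eigMin P) * vecNorm x ≤ pnorm P x := by
  rw [pnorm, vecNorm, ← Real.sqrt_mul (eigMin_nonneg hP)]
  apply Real.sqrt_le_sqrt
  exact eigMin_mul_le_quadform hP x

lemma softThreshold_close {a : ℕ} (η : ℝ) (hη : 0 < η) (ρ : Fin a → ℝ)
    (hρ : ∀ i, 0 ≤ ρ i) (v : Fin a → ℝ) (i : Fin a) :
    |softThreshold η ρ v i - v i| ≤ η * ρ i := by
  have hηρ : 0 ≤ η * ρ i := mul_nonneg hη.le (hρ i)
  rw [softThreshold]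
  rcases lt_trichotomy (v i) 0 with h | h | h
  · rw [Real.sign_of_neg h]
    rcases le_or_gt (|v i| - η * ρ i) 0 with h2 | h2
    · rw [max_eq_right h2]
      rw [abs_of_neg h] at h2
      simp only [neg_one_mul, neg_zero, zero_sub, abs_neg]
      rw [abs_of_neg h]
      linarith
    · rw [max_eq_left h2.le, abs_of_neg h]
      have : -1 * (-v i - η * ρ i) - v i = η * ρ i := by ring
      rw [this, abs_of_nonneg hηρ]
  · rw [h, Real.sign_zero]
    simp [hηρ]
  · rw [Real.sign_of_pos h]
    rcases le_or_gt (|v i| - η * ρ i) 0 with h2 | h2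
    · rw [max_eq_right h2]
      rw [abs_of_pos h] at h2
      simp only [one_mul, mul_zero, zero_sub, abs_neg]
      rw [abs_of_pos h]
      linarith
    · rw [max_eq_left h2.le, abs_of_pos h]
      have : 1 * (v i - η * ρ i) - v i = -(η * ρ i) := by ring
      rw [this, abs_neg, abs_of_nonneg hηρ]

lemma quad_expand {a : ℕ} {M : Matrix (Fin a) (Fin a) ℝ} (hM : Mᵀ = M)
    (u v : Fin a → ℝ) (t : ℝ) :
    (u + t • v) ⬝ᵥ M *ᵥ (u + t • v)
      = u ⬝ᵥ M *ᵥ u + 2 * t * (v ⬝ᵥ M *ᵥ u) + t ^ 2 * (v ⬝ᵥ M *ᵥ v) := by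
  rw [Matrix.mulVec_add, add_dotProduct, dotProduct_add,
    dotProduct_add, Matrix.mulVec_smul, dotProduct_smul,
    smul_dotProduct, smul_dotProduct, dotProduct_smul,
    quad_symm hM u v]
  simp only [smul_eq_mul]; ring

lemma single_dot {a : ℕ} (i : Fin a) (y : Fin a → ℝ) :
    (Pi.single i 1 : Fin a → ℝ) ⬝ᵥ y = y i := by
  simp [dotProduct, Pi.single_apply, Finset.sum_ite_eq']

lemma mulVec_dot {a b : ℕ} (M : Matrix (Fin a) (Fin b) ℝ) (x : Fin b → ℝ) (y : Fin a → ℝ) :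
    (M *ᵥ x) ⬝ᵥ y = x ⬝ᵥ (Mᵀ *ᵥ y) := by
  rw [dotProduct_comm, Matrix.dotProduct_mulVec, ← Matrix.mulVec_transpose,
    dotProduct_comm]

lemma quad_conj {a b : ℕ} (A : Matrix (Fin a) (Fin b) ℝ) (P : Matrix (Fin a) (Fin a) ℝ)
    (e : Fin b → ℝ) : (A *ᵥ e) ⬝ᵥ P *ᵥ (A *ᵥ e) = e ⬝ᵥ (Aᵀ * P * A) *ᵥ e := by
  rw [mulVec_dot, Matrix.mulVec_mulVec, Matrix.mulVec_mulVec, Matrix.mul_assoc]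

lemma grad_opt {m p : ℕ} (R : Matrix (Fin m) (Fin m) ℝ) (Q : Matrix (Fin p) (Fin p) ℝ)
    (hR : R.PosSemidef) (hQ : Q.PosSemidef) (lam : ℝ) (hlam : 0 ≤ lam)
    (ρcol : Fin m → ℝ) (hρcol : ∀ i, 0 ≤ ρcol i)
    (Hhat : Matrix (Fin p) (Fin m) ℝ) (d rk : Fin p → ℝ) (us : Fin m → ℝ)
    (hmin : ∀ v : Fin m → ℝ, v ≠ us →
      Phi1 R Q lam ρcol Hhat d rk us < Phi1 R Q lam ρcol Hhat d rk v)
    (i : Fin m) :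
    |((2:ℝ) • (R *ᵥ us + lam • (Hhatᵀ *ᵥ (Q *ᵥ (Hhat *ᵥ us + d - rk))))) i| ≤ ρcol i := by
  have hRsym := transpose_eq_of_hermitian hR.1
  have hQsym := transpose_eq_of_hermitian hQ.1
  set z : Fin p → ℝ := Hhat *ᵥ us + d - rk with hz
  set e : Fin m → ℝ := Pi.single i 1 with he
  set h : Fin p → ℝ := Hhat *ᵥ e with hh
  set g : ℝ := 2 * ((R *ᵥ us) i + lam * ((Hhatᵀ *ᵥ (Q *ᵥ z)) i)) with hg
  set q : ℝ := e ⬝ᵥ R *ᵥ e + lam * (h ⬝ᵥ Q *ᵥ h) with hq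
  have hqnn : 0 ≤ q := by
    have h1 : 0 ≤ e ⬝ᵥ R *ᵥ e := by simpa using hR.dotProduct_mulVec_nonneg e
    have h2 : 0 ≤ h ⬝ᵥ Q *ᵥ h := by simpa using hQ.dotProduct_mulVec_nonneg h
    have := mul_nonneg hlam h2
    linarith
  -- key inequality
  have key : ∀ t : ℝ, 0 ≤ t * g + t ^ 2 * q + ρcol i * |t| := by
    intro t
    have hPhile : Phi1 R Q lam ρcol Hhat d rk us ≤ Phi1 R Q lam ρcol Hhat d rk (us + t • e) := by
      rcases eq_or_ne t 0 with rfl | ht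
      · simp
      · apply le_of_lt
        apply hmin
        intro hcontra
        have : (us + t • e) i = us i := by rw [hcontra]
        simp [he, Pi.single_apply] at this
        exact ht this
    have expand : Phi1 R Q lam ρcol Hhat d rk (us + t • e)
        = Phi1 R Q lam ρcol Hhat d rk us + t * g + t ^ 2 * q
          + ρcol i * (|us i + t| - |us i|) := by
      rw [Phi1, Phi1]
      have hHe : Hhat *ᵥ (us + t • e) + d - rk = z + t • h := by
        rw [Matrix.mulVec_add, Matrix.mulVec_smul, hz, hh]
        abel
      rw [hHe, quad_expand hRsym us e t, quad_expand hQsym z h t]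
      have hlin1 : e ⬝ᵥ R *ᵥ us = (R *ᵥ us) i := single_dot i _
      have hlin2 : h ⬝ᵥ Q *ᵥ z = (Hhatᵀ *ᵥ (Q *ᵥ z)) i := by
        rw [hh, mulVec_dot, single_dot]
      have habs : ∑ j, ρcol j * |(us + t • e) j|
          = (∑ j, ρcol j * |us j|) + ρcol i * (|us i + t| - |us i|) := by
        have : ∀ j, ρcol j * |(us + t • e) j|
            = ρcol j * |us j| + (if j = i then ρcol i * (|us i + t| - |us i|) else 0) := by
          intro j
          by_cases hji : j = i
          · subst hji
            simp [he, Pi.single_apply]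
            ring
          · simp [he, Pi.single_apply, hji]
        rw [Finset.sum_congr rfl (fun j _ => this j), Finset.sum_add_distrib,
          Finset.sum_ite_eq' Finset.univ i (fun _ => ρcol i * (|us i + t| - |us i|))]
        simp
      rw [habs, hlin1, hlin2, hg, hq]
      ring
    rw [expand] at hPhile
    have h2 : ρcol i * (|us i + t| - |us i|) ≤ ρcol i * |t| := by
      apply mul_le_mul_of_nonneg_left _ (hρcol i)
      have := abs_add_le (us i) t
      have h3 := abs_sub_abs_le_abs_sub (us i + t) (us i)
      simp at h3
      linarith
    linarith
  -- conclude |g| ≤ ρcol i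
  have hgle : ∀ s : ℝ, 0 < s → |g| ≤ ρcol i + s * q := by
    intro s hs
    have k1 := key (-s)
    have k2 := key s
    rw [abs_neg, abs_of_pos hs] at k1
    rw [abs_of_pos hs] at k2
    rw [abs_le]
    constructor
    · nlinarith
    · nlinarith
  have : |g| ≤ ρcol i := by
    apply le_of_forall_pos_le_add
    intro ε hε
    rcases eq_or_lt_of_le hqnn with hq0 | hq0
    · have := hgle 1 one_pos
      rw [← hq0] at this
      linarith
    · have := hgle (ε / q) (div_pos hε hq0)
      rw [div_mul_cancel₀ _ (ne_of_gt hq0)] at this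
      linarith
  have hgi : ((2:ℝ) • (R *ᵥ us + lam • (Hhatᵀ *ᵥ (Q *ᵥ (Hhat *ᵥ us + d - rk))))) i = g := by
    simp [hg, hz, smul_eq_mul]
  rw [hgi]
  exact this

lemma vecNorm_le_vecNorm_of_abs_le {a : ℕ} {w ρ : Fin a → ℝ} (hρ : ∀ i, 0 ≤ ρ i)
    (h : ∀ i, |w i| ≤ ρ i) : vecNorm w ≤ vecNorm ρ := by
  apply vecNorm_mono
  intro i
  rw [abs_of_nonneg (hρ i)]
  exact h i

lemma isUnit_one_sub {n : ℕ} (A : Matrix (Fin n) (Fin n) ℝ)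
    (hA : spectralRadius ℂ (A.map Complex.ofReal) < 1) :
    IsUnit (1 - A) := by
  rw [Matrix.isUnit_iff_isUnit_det]
  rw [isUnit_iff_ne_zero]
  intro hdet
  have hdetC : ((1 : Matrix (Fin n) (Fin n) ℂ) - A.map Complex.ofReal).det = 0 := by
    have hmap : ((1 : Matrix (Fin n) (Fin n) ℝ) - A).map (Complex.ofReal)
        = (1 : Matrix (Fin n) (Fin n) ℂ) - A.map Complex.ofReal := by
      ext i j
      simp [Matrix.map_apply, Matrix.sub_apply, Matrix.one_apply]
      split <;> simp
    rw [← hmap]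
    have h := RingHom.map_det Complex.ofRealHom (1 - A)
    rw [hdet] at h
    simp only [map_zero] at h
    exact h.symm
  have hmem : (1 : ℂ) ∈ spectrum ℂ (A.map Complex.ofReal) := by
    rw [spectrum.mem_iff]
    rw [Matrix.isUnit_iff_isUnit_det, isUnit_iff_ne_zero]
    push_neg
    rw [_root_.map_one]
    exact hdetC
  have hle : (1 : ENNReal) ≤ spectralRadius ℂ (A.map Complex.ofReal) := by
    have := le_iSup₂ (f := fun (k : ℂ) (_ : k ∈ spectrum ℂ (A.map Complex.ofReal)) =>
      (‖k‖₊ : ENNReal)) 1 hmem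
    simpa [spectralRadius] using this
  exact absurd hA (not_lt.2 hle)

lemma gamma_le_one {n : ℕ} [NeZero n] {A P Qbar : Matrix (Fin n) (Fin n) ℝ}
    (hP : P.PosDef) (hQbar : Qbar.PosDef) (hLyap : Aᵀ * P * A - P + Qbar = 0) :
    eigMin Qbar / eigMax P ≤ 1 := by
  have hAPA : Aᵀ * P * A = P - Qbar := by rwa [sub_add, sub_eq_zero] at hLyap
  rw [div_le_one (eigMax_pos hP)]
  set e : Fin n → ℝ := Pi.single 0 1 with he
  have hes : ∑ i, e i ^ 2 = 1 := by simp [he, Pi.single_apply, Finset.sum_ite_eq']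
  have h1 : eigMin Qbar ≤ e ⬝ᵥ Qbar *ᵥ e := eigMin_le_rayleigh hQbar.posSemidef e hes
  have h2 : e ⬝ᵥ Qbar *ᵥ e ≤ e ⬝ᵥ P *ᵥ e := by
    have hQe : Qbar = P - Aᵀ * P * A := by rw [hAPA]; abel
    have hq : e ⬝ᵥ Qbar *ᵥ e = e ⬝ᵥ P *ᵥ e - (A *ᵥ e) ⬝ᵥ P *ᵥ (A *ᵥ e) := by
      rw [hQe, Matrix.sub_mulVec, dotProduct_sub, quad_conj]
    have hApos : 0 ≤ (A *ᵥ e) ⬝ᵥ P *ᵥ (A *ᵥ e) := by simpa using hP.posSemidef.dotProduct_mulVec_nonneg (A *ᵥ e)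
    linarith
  have h3 : e ⬝ᵥ P *ᵥ e ≤ eigMax P := rayleigh_le_eigMax P e hes
  linarith

lemma contraction {n : ℕ} [NeZero n] {A P Qbar : Matrix (Fin n) (Fin n) ℝ}
    (hP : P.PosDef) (hQbar : Qbar.PosDef) (hLyap : Aᵀ * P * A - P + Qbar = 0)
    (e : Fin n → ℝ) :
    pnorm P (A *ᵥ e) ≤ Real.sqrt (1 - eigMin Qbar / eigMax P) * pnorm P e := by
  have hAPA : Aᵀ * P * A = P - Qbar := by rwa [sub_add, sub_eq_zero] at hLyap
  set γ : ℝ := eigMin Qbar / eigMax P with hγ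
  have hγnn : 0 ≤ γ := div_nonneg (eigMin_nonneg hQbar.posSemidef) (eigMax_pos hP).le
  have hγ1 : γ ≤ 1 := gamma_le_one hP hQbar hLyap
  have hkey : (A *ᵥ e) ⬝ᵥ P *ᵥ (A *ᵥ e) ≤ (1 - γ) * (e ⬝ᵥ P *ᵥ e) := by
    have h0 : (A *ᵥ e) ⬝ᵥ P *ᵥ (A *ᵥ e) = e ⬝ᵥ P *ᵥ e - e ⬝ᵥ Qbar *ᵥ e := by
      rw [quad_conj, hAPA, Matrix.sub_mulVec, dotProduct_sub]
    have h1 : γ * (e ⬝ᵥ P *ᵥ e) ≤ e ⬝ᵥ Qbar *ᵥ e := by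
      have ha : e ⬝ᵥ P *ᵥ e ≤ eigMax P * (∑ i, e i ^ 2) := quadform_le_eigMax P e
      have hb : eigMin Qbar * (∑ i, e i ^ 2) ≤ e ⬝ᵥ Qbar *ᵥ e :=
        eigMin_mul_le_quadform hQbar.posSemidef e
      have hγmul : γ * eigMax P = eigMin Qbar := by
        rw [hγ, div_mul_cancel₀ _ (ne_of_gt (eigMax_pos hP))]
      calc γ * (e ⬝ᵥ P *ᵥ e) ≤ γ * (eigMax P * (∑ i, e i ^ 2)) :=
            mul_le_mul_of_nonneg_left ha hγnn
        _ = eigMin Qbar * (∑ i, e i ^ 2) := by rw [← hγmul]; ring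
        _ ≤ e ⬝ᵥ Qbar *ᵥ e := hb
    rw [h0]
    linarith
  rw [pnorm, pnorm]
  calc Real.sqrt ((A *ᵥ e) ⬝ᵥ P *ᵥ (A *ᵥ e)) ≤ Real.sqrt ((1 - γ) * (e ⬝ᵥ P *ᵥ e)) :=
        Real.sqrt_le_sqrt hkey
    _ = Real.sqrt (1 - γ) * Real.sqrt (e ⬝ᵥ P *ᵥ e) := Real.sqrt_mul (by linarith) _

/-- Lemma 1 of the paper for the ℓ1-controller (12). -/
theorem stmt10 {n m p : ℕ}
    (A : Matrix (Fin n) (Fin n) ℝ) (B : Matrix (Fin n) (Fin m) ℝ) (C : Matrix (Fin p) (Fin n) ℝ)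
    (hA : spectralRadius ℂ (A.map Complex.ofReal) < 1)
    (Qbar P : Matrix (Fin n) (Fin n) ℝ) (hQbar : Qbar.PosDef) (hP : P.PosDef)
    (hLyap : Aᵀ * P * A - P + Qbar = 0)
    (R : Matrix (Fin m) (Fin m) ℝ) (Q : Matrix (Fin p) (Fin p) ℝ)
    (hR : R.PosSemidef) (hQ : Q.PosSemidef)
    (lam : ℝ) (hlam : 0 ≤ lam) (Hhat : Matrix (Fin p) (Fin m) ℝ)
    (hS : ((2 : ℝ) • (R + lam • (Hhatᵀ * Q * Hhat))).PosDef)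
    (r : ℕ → Fin p → ℝ) (η : ℝ) (hη : 0 < η)
    (ρcol : Fin m → ℝ) (hρcol : ∀ i, 0 ≤ ρcol i)
    (dx : ℕ → Fin n → ℝ) (dy : ℕ → Fin p → ℝ)
    (x : ℕ → Fin n → ℝ) (u : ℕ → Fin m → ℝ) (y : ℕ → Fin p → ℝ)
    (hdyn : ∀ k, x (k + 1) = A *ᵥ x k + B *ᵥ u k + dx k)
    (hout : ∀ k, y k = C *ᵥ x k + dy k)
    (hctrl : ∀ k, u (k + 1) =
      softThreshold η ρcol (u k - (2 * η) • (R *ᵥ u k + lam • (Hhatᵀ *ᵥ (Q *ᵥ (y k - r k))))))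
    (ustar : ℕ → Fin m → ℝ)
    (hustar : ∀ k, ∀ v : Fin m → ℝ, v ≠ ustar k →
      Phi1 R Q lam ρcol Hhat (C *ᵥ ((1 - A)⁻¹ *ᵥ dx k) + dy k) (r k) (ustar k)
        < Phi1 R Q lam ρcol Hhat (C *ᵥ ((1 - A)⁻¹ *ᵥ dx k) + dy k) (r k) v)
    (H : Matrix (Fin p) (Fin m) ℝ) (hH : H = C * (1 - A)⁻¹ * B)
    (xss : ℕ → Fin n → ℝ) (hxss : ∀ k, xss k = (1 - A)⁻¹ *ᵥ (B *ᵥ u k + dx k))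
    (γ c1 c2 c3 c4 c5 : ℝ)
    (hγ : γ = eigMin Qbar / eigMax P)
    (hc1 : c1 = Real.sqrt (1 - γ) + 2 * η * lam * spec ((1 - A)⁻¹ * B) * spec (Hhatᵀ * Q)
      * spec C * Real.sqrt (eigMax P) / Real.sqrt (eigMin P))
    (hc2 : c2 = Real.sqrt (eigMax P) * spec ((1 - A)⁻¹ * B)
      * spec ((2 : ℝ) • (R + lam • (Hhatᵀ * Q * Hhat))))
    (hc3 : c3 = 2 * lam * Real.sqrt (eigMax P) * spec ((1 - A)⁻¹ * B) * spec (Hhatᵀ * Q))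
    (hc4 : c4 = Real.sqrt (eigMax P) * spec ((1 - A)⁻¹))
    (hc5 : c5 = 2 * Real.sqrt (eigMax P) * spec ((1 - A)⁻¹ * B) * vecNorm ρcol) :
    ∀ k : ℕ,
      pnorm P (x (k + 1) - xss (k + 1))
        ≤ c1 * pnorm P (x k - xss k) + η * c2 * vecNorm (u k - ustar k)
          + η * c3 * spec (H - Hhat) * vecNorm (u k)
          + c4 * vecNorm (dx (k + 1) - dx k) + η * c5 := by
  intro k
  rcases Nat.eq_zero_or_pos n with hn | hn
  · -- degenerate case n = 0
    subst hn
    have hpz : ∀ v : Fin 0 → ℝ, pnorm P v = 0 := by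
      intro v; simp [pnorm, dotProduct]
    have hset : {r : ℝ | ∃ z : Fin 0 → ℝ, ∑ i, z i ^ 2 = 1 ∧ r = z ⬝ᵥ P *ᵥ z} = ∅ := by
      ext r; simp
    have heM : eigMax P = 0 := by rw [eigMax, hset, Real.sSup_empty]
    rw [hpz, hpz, hc2, hc3, hc4, hc5, heM]
    simp
  · haveI : NeZero n := ⟨Nat.pos_iff_ne_zero.mp hn⟩
    have hPsd := hP.posSemidef
    have hU : IsUnit (1 - A) := isUnit_one_sub A hA
    have hUdet : IsUnit (1 - A).det := (Matrix.isUnit_iff_isUnit_det _).1 hU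
    have hinv : (1 - A) * (1 - A)⁻¹ = 1 := Matrix.mul_nonsing_inv _ hUdet
    rw [hγ] at hc1
    set MB : Matrix (Fin n) (Fin m) ℝ := (1 - A)⁻¹ * B with hMB
    set S : Matrix (Fin m) (Fin m) ℝ := (2 : ℝ) • (R + lam • (Hhatᵀ * Q * Hhat)) with hSdef
    set eMx := Real.sqrt (eigMax P) with heMx
    set eMn := Real.sqrt (eigMin P) with heMn
    set sB := spec MB with hsB
    set sHQ := spec (Hhatᵀ * Q) with hsHQ
    set sC := spec C with hsC
    set sS := spec S with hsS
    set sI := spec (1 - A)⁻¹ with hsI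
    set sD := spec (H - Hhat) with hsD
    have heMnpos : 0 < eMn := Real.sqrt_pos.2 (eigMin_pos hP)
    have heMxnn : 0 ≤ eMx := Real.sqrt_nonneg _
    have hsBnn : 0 ≤ sB := spec_nonneg _
    have hsHQnn : 0 ≤ sHQ := spec_nonneg _
    have hsCnn : 0 ≤ sC := spec_nonneg _
    have hsSnn : 0 ≤ sS := spec_nonneg _
    have hsInn : 0 ≤ sI := spec_nonneg _
    have hsDnn : 0 ≤ sD := spec_nonneg _
    set ek : Fin n → ℝ := x k - xss k with hek
    -- steady-state identities
    have hxssA : ∀ j, A *ᵥ xss j = xss j - (B *ᵥ u j + dx j) := by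
      intro j
      have h1 : (1 - A) *ᵥ xss j = B *ᵥ u j + dx j := by
        rw [hxss j, Matrix.mulVec_mulVec, hinv, Matrix.one_mulVec]
      rw [Matrix.sub_mulVec, Matrix.one_mulVec] at h1
      rw [← h1]; abel
    have h1 : A *ᵥ ek = x (k + 1) - xss k := by
      rw [hek, Matrix.mulVec_sub, hxssA k, hdyn k]; abel
    have h2 : xss k - xss (k + 1)
        = MB *ᵥ (u k - u (k + 1)) + (1 - A)⁻¹ *ᵥ (dx k - dx (k + 1)) := by
      have hsum : (B *ᵥ u k + dx k) - (B *ᵥ u (k + 1) + dx (k + 1))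
          = B *ᵥ (u k - u (k + 1)) + (dx k - dx (k + 1)) := by
        rw [Matrix.mulVec_sub]; abel
      rw [hxss k, hxss (k + 1), ← Matrix.mulVec_sub, hsum, Matrix.mulVec_add, hMB,
        ← Matrix.mulVec_mulVec]
    have hdecomp : x (k + 1) - xss (k + 1)
        = A *ᵥ ek + (MB *ᵥ (u k - u (k + 1)) + (1 - A)⁻¹ *ᵥ (dx k - dx (k + 1))) := by
      rw [← h2, h1]; abel
    -- triangle inequality
    have htri : pnorm P (x (k + 1) - xss (k + 1))
        ≤ pnorm P (A *ᵥ ek) + pnorm P (MB *ᵥ (u k - u (k + 1)))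
          + pnorm P ((1 - A)⁻¹ *ᵥ (dx k - dx (k + 1))) := by
      rw [hdecomp]
      have t1 := pnorm_add_le hPsd (A *ᵥ ek)
        (MB *ᵥ (u k - u (k + 1)) + (1 - A)⁻¹ *ᵥ (dx k - dx (k + 1)))
      have t2 := pnorm_add_le hPsd (MB *ᵥ (u k - u (k + 1)))
        ((1 - A)⁻¹ *ᵥ (dx k - dx (k + 1)))
      linarith
    have hT1 : pnorm P (A *ᵥ ek) ≤ Real.sqrt (1 - eigMin Qbar / eigMax P) * pnorm P ek :=
      contraction hP hQbar hLyap ek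
    have hT2 : pnorm P (MB *ᵥ (u k - u (k + 1))) ≤ eMx * (sB * vecNorm (u (k + 1) - u k)) := by
      calc pnorm P (MB *ᵥ (u k - u (k + 1)))
          ≤ eMx * vecNorm (MB *ᵥ (u k - u (k + 1))) := pnorm_le_sqrt_eigMax_vecNorm hPsd _
        _ ≤ eMx * (sB * vecNorm (u k - u (k + 1))) :=
            mul_le_mul_of_nonneg_left (vecNorm_mulVec_le _ _) heMxnn
        _ = eMx * (sB * vecNorm (u (k + 1) - u k)) := by rw [vecNorm_sub_rev]
    have hT3 : pnorm P ((1 - A)⁻¹ *ᵥ (dx k - dx (k + 1)))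
        ≤ eMx * (sI * vecNorm (dx (k + 1) - dx k)) := by
      calc pnorm P ((1 - A)⁻¹ *ᵥ (dx k - dx (k + 1)))
          ≤ eMx * vecNorm ((1 - A)⁻¹ *ᵥ (dx k - dx (k + 1))) := pnorm_le_sqrt_eigMax_vecNorm hPsd _
        _ ≤ eMx * (sI * vecNorm (dx k - dx (k + 1))) :=
            mul_le_mul_of_nonneg_left (vecNorm_mulVec_le _ _) heMxnn
        _ = eMx * (sI * vecNorm (dx (k + 1) - dx k)) := by rw [vecNorm_sub_rev]
    -- controller step
    set gk : Fin m → ℝ := (2 : ℝ) • (R *ᵥ u k + lam • (Hhatᵀ *ᵥ (Q *ᵥ (y k - r k)))) with hgk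
    set vk : Fin m → ℝ := u k - η • gk with hvkdef
    have hvk : u (k + 1) = softThreshold η ρcol vk := by
      rw [hctrl k, hvkdef, hgk]
      congr 1
      rw [smul_smul, mul_comm]
    have hsplit : u (k + 1) - u k = (softThreshold η ρcol vk - vk) + (-(η • gk)) := by
      rw [hvk, hvkdef]; abel
    have hDu : vecNorm (u (k + 1) - u k) ≤ η * vecNorm ρcol + η * vecNorm gk := by
      rw [hsplit]
      have ha : vecNorm (softThreshold η ρcol vk - vk) ≤ η * vecNorm ρcol := by
        have h1 : ∀ i, |(softThreshold η ρcol vk - vk) i| ≤ η * ρcol i := by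
          intro i
          exact softThreshold_close η hη ρcol hρcol vk i
        have h2 : vecNorm (softThreshold η ρcol vk - vk) ≤ vecNorm (η • ρcol) := by
          apply vecNorm_le_vecNorm_of_abs_le
          · intro i
            exact mul_nonneg hη.le (hρcol i)
          · intro i
            exact h1 i
        rwa [vecNorm_smul, abs_of_pos hη] at h2
      have hb : vecNorm (-(η • gk)) = η * vecNorm gk := by
        rw [vecNorm_neg, vecNorm_smul, abs_of_pos hη]
      have hc := vecNorm_add_le (softThreshold η ρcol vk - vk) (-(η • gk))
      rw [hb] at hc
      linarith
    -- gradient decomposition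
    set dk : Fin p → ℝ := C *ᵥ ((1 - A)⁻¹ *ᵥ dx k) + dy k with hdk
    set w : Fin p → ℝ := (H - Hhat) *ᵥ u k + C *ᵥ ek with hw
    have hyr : y k - r k = (Hhat *ᵥ u k + dk - r k) + w := by
      have hCxss : C *ᵥ xss k = H *ᵥ u k + C *ᵥ ((1 - A)⁻¹ *ᵥ dx k) := by
        rw [hxss k, Matrix.mulVec_add, Matrix.mulVec_add, hH, Matrix.mulVec_mulVec,
          Matrix.mulVec_mulVec]
      rw [hout k, hw, hdk, hek, Matrix.sub_mulVec, Matrix.mulVec_sub, hCxss]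
      abel
    set gstar : Fin m → ℝ :=
      (2 : ℝ) • (R *ᵥ ustar k + lam • (Hhatᵀ *ᵥ (Q *ᵥ (Hhat *ᵥ ustar k + dk - r k)))) with hgstar
    have hglin :
        ((2 : ℝ) • (R *ᵥ u k + lam • (Hhatᵀ *ᵥ (Q *ᵥ (Hhat *ᵥ u k + dk - r k))))) - gstar
          = S *ᵥ (u k - ustar k) := by
      have e1 : Hhat *ᵥ u k + dk - r k
          = (Hhat *ᵥ ustar k + dk - r k) + Hhat *ᵥ (u k - ustar k) := by
        rw [Matrix.mulVec_sub]; abel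
      rw [hgstar, e1, Matrix.mulVec_add Q, Matrix.mulVec_add Hhatᵀ, hSdef,
        Matrix.smul_mulVec, Matrix.add_mulVec, Matrix.smul_mulVec,
        ← Matrix.mulVec_mulVec, ← Matrix.mulVec_mulVec, Matrix.mulVec_sub R]
      module
    have hgfree : gk
        = ((2 : ℝ) • (R *ᵥ u k + lam • (Hhatᵀ *ᵥ (Q *ᵥ (Hhat *ᵥ u k + dk - r k)))))
          + (2 * lam) • (Hhatᵀ *ᵥ (Q *ᵥ w)) := by
      rw [hgk, hyr, Matrix.mulVec_add Q, Matrix.mulVec_add Hhatᵀ]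
      module
    have hgkdec : gk = S *ᵥ (u k - ustar k) + gstar + (2 * lam) • (Hhatᵀ *ᵥ (Q *ᵥ w)) := by
      rw [hgfree, ← hglin]; abel
    -- bound on vecNorm gk
    have hgstarb : vecNorm gstar ≤ vecNorm ρcol := by
      apply vecNorm_le_vecNorm_of_abs_le hρcol
      intro i
      exact grad_opt R Q hR hQ lam hlam ρcol hρcol Hhat dk (r k) (ustar k)
        (fun v hv => hustar k v hv) i
    have hwb : vecNorm w ≤ sD * vecNorm (u k) + sC * vecNorm ek := by
      rw [hw]
      calc vecNorm ((H - Hhat) *ᵥ u k + C *ᵥ ek)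
          ≤ vecNorm ((H - Hhat) *ᵥ u k) + vecNorm (C *ᵥ ek) := vecNorm_add_le _ _
        _ ≤ sD * vecNorm (u k) + sC * vecNorm ek :=
            add_le_add (vecNorm_mulVec_le _ _) (vecNorm_mulVec_le _ _)
    have hgkb : vecNorm gk ≤ sS * vecNorm (u k - ustar k) + vecNorm ρcol
        + 2 * lam * (sHQ * (sD * vecNorm (u k) + sC * vecNorm ek)) := by
      rw [hgkdec]
      have t1 := vecNorm_add_le (S *ᵥ (u k - ustar k) + gstar) ((2 * lam) • (Hhatᵀ *ᵥ (Q *ᵥ w)))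
      have t2 := vecNorm_add_le (S *ᵥ (u k - ustar k)) gstar
      have b1 : vecNorm (S *ᵥ (u k - ustar k)) ≤ sS * vecNorm (u k - ustar k) := vecNorm_mulVec_le _ _
      have b3 : vecNorm ((2 * lam) • (Hhatᵀ *ᵥ (Q *ᵥ w)))
          ≤ 2 * lam * (sHQ * (sD * vecNorm (u k) + sC * vecNorm ek)) := by
        rw [vecNorm_smul, abs_of_nonneg (by linarith : (0:ℝ) ≤ 2 * lam)]
        apply mul_le_mul_of_nonneg_left _ (by linarith : (0:ℝ) ≤ 2 * lam)
        have hmm : Hhatᵀ *ᵥ (Q *ᵥ w) = (Hhatᵀ * Q) *ᵥ w := Matrix.mulVec_mulVec _ _ _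
        calc vecNorm (Hhatᵀ *ᵥ (Q *ᵥ w)) = vecNorm ((Hhatᵀ * Q) *ᵥ w) := by rw [hmm]
          _ ≤ sHQ * vecNorm w := vecNorm_mulVec_le _ _
          _ ≤ sHQ * (sD * vecNorm (u k) + sC * vecNorm ek) :=
              mul_le_mul_of_nonneg_left hwb hsHQnn
      linarith
    -- error norm bound
    have hee : vecNorm ek ≤ pnorm P ek / eMn := by
      rw [le_div_iff₀ heMnpos]
      calc vecNorm ek * eMn = eMn * vecNorm ek := mul_comm _ _
        _ ≤ pnorm P ek := sqrt_eigMin_vecNorm_le_pnorm hPsd ek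
    have hgkb2 : vecNorm gk ≤ sS * vecNorm (u k - ustar k) + vecNorm ρcol
        + 2 * lam * (sHQ * (sD * vecNorm (u k) + sC * (pnorm P ek / eMn))) := by
      have step : 2 * lam * (sHQ * (sD * vecNorm (u k) + sC * vecNorm ek))
          ≤ 2 * lam * (sHQ * (sD * vecNorm (u k) + sC * (pnorm P ek / eMn))) := by
        apply mul_le_mul_of_nonneg_left _ (by linarith : (0:ℝ) ≤ 2 * lam)
        apply mul_le_mul_of_nonneg_left _ hsHQnn
        exact add_le_add_right (mul_le_mul_of_nonneg_left hee hsCnn) _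
      linarith
    -- assemble
    have hK : (0:ℝ) ≤ eMx * sB := mul_nonneg heMxnn hsBnn
    have hmain : pnorm P (x (k + 1) - xss (k + 1))
        ≤ Real.sqrt (1 - eigMin Qbar / eigMax P) * pnorm P ek
          + eMx * sB * (η * vecNorm ρcol + η * (sS * vecNorm (u k - ustar k) + vecNorm ρcol
              + 2 * lam * (sHQ * (sD * vecNorm (u k) + sC * (pnorm P ek / eMn)))))
          + eMx * (sI * vecNorm (dx (k + 1) - dx k)) := by
      have hDu2 : vecNorm (u (k + 1) - u k)
          ≤ η * vecNorm ρcol + η * (sS * vecNorm (u k - ustar k) + vecNorm ρcol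
              + 2 * lam * (sHQ * (sD * vecNorm (u k) + sC * (pnorm P ek / eMn)))) := by
        have := mul_le_mul_of_nonneg_left hgkb2 hη.le
        linarith
      have hprod : eMx * (sB * vecNorm (u (k + 1) - u k))
          ≤ eMx * sB * (η * vecNorm ρcol + η * (sS * vecNorm (u k - ustar k) + vecNorm ρcol
              + 2 * lam * (sHQ * (sD * vecNorm (u k) + sC * (pnorm P ek / eMn))))) := by
        rw [mul_assoc]
        exact mul_le_mul_of_nonneg_left (mul_le_mul_of_nonneg_left hDu2 hsBnn) heMxnn
      linarith
    calc pnorm P (x (k + 1) - xss (k + 1))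
        ≤ Real.sqrt (1 - eigMin Qbar / eigMax P) * pnorm P ek
          + eMx * sB * (η * vecNorm ρcol + η * (sS * vecNorm (u k - ustar k) + vecNorm ρcol
              + 2 * lam * (sHQ * (sD * vecNorm (u k) + sC * (pnorm P ek / eMn)))))
          + eMx * (sI * vecNorm (dx (k + 1) - dx k)) := hmain
      _ = c1 * pnorm P ek + η * c2 * vecNorm (u k - ustar k)
          + η * c3 * sD * vecNorm (u k) + c4 * vecNorm (dx (k + 1) - dx k) + η * c5 := by
          rw [hc1, hc2, hc3, hc4, hc5]
          ring
end

section
/- Consider the interconnection of the plant with the ℓ2-controller. Let μ = 2λ_min(R + λĤᵀQĤ + ρ_gen I) > 0 and L = 2λ_max(R + λĤᵀQĤ + ρ_gen I), and assume η ∈ (0, 2μ/L²). Then for every k ≥ 0, ‖u_{k+1} − u_{k+1}*‖ ≤ α·‖u_k − u_k*‖ + η·(L_T^y·‖C‖/√(λ_min(P)))·‖x_k − x_{ss,k}‖_P + η·L_T^y·‖H − Ĥ‖·‖u_k‖ + ‖u_{k+1}* − u_k*‖, where α = √(1 − η(2μ − ηL²)) ∈ [0,1) and L_T^y = 2λ‖ĤᵀQ‖.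 -/
open Matrix BigOperators

namespace S11

lemma enorm_eq {a : ℕ} (x : Fin a → ℝ) :
    euclNorm x = ‖(WithLp.equiv 2 (Fin a → ℝ)).symm x‖ := by
  rw [EuclideanSpace.norm_eq]
  simp [euclNorm, Real.norm_eq_abs, sq_abs]

lemma enorm_nonneg {a : ℕ} (x : Fin a → ℝ) : 0 ≤ euclNorm x := Real.sqrt_nonneg _

lemma enorm_sq {a : ℕ} (x : Fin a → ℝ) : euclNorm x ^ 2 = ∑ i, x i ^ 2 :=
  Real.sq_sqrt (Finset.sum_nonneg fun i _ => sq_nonneg _)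

lemma enorm_sq_dot {a : ℕ} (x : Fin a → ℝ) : euclNorm x ^ 2 = x ⬝ᵥ x := by
  unfold euclNorm
  rw [Real.sq_sqrt (Finset.sum_nonneg fun i _ => sq_nonneg _)]
  simp [dotProduct, sq]

lemma enorm_eq_zero' {a : ℕ} {x : Fin a → ℝ} : euclNorm x = 0 ↔ x = 0 := by
  constructor
  · intro h
    have h2 : ∑ i, x i ^ 2 = 0 := by
      have := congrArg (· ^ 2) h
      simpa [enorm_sq] using this
    funext i
    have := (Finset.sum_eq_zero_iff_of_nonneg (fun i _ => sq_nonneg (x i))).1 h2 i (by simp)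
    exact pow_eq_zero_iff (n := 2) (by norm_num) |>.1 this
  · rintro rfl; simp [euclNorm]

lemma enorm_pos {a : ℕ} {x : Fin a → ℝ} (hx : x ≠ 0) : 0 < euclNorm x :=
  lt_of_le_of_ne (enorm_nonneg x) (fun h => hx (enorm_eq_zero'.mp h.symm))

lemma enorm_add_le {a : ℕ} (x y : Fin a → ℝ) : euclNorm (x + y) ≤ euclNorm x + euclNorm y := by
  simp only [enorm_eq]
  rw [show (WithLp.equiv 2 (Fin a → ℝ)).symm (x + y)
      = (WithLp.equiv 2 (Fin a → ℝ)).symm x + (WithLp.equiv 2 (Fin a → ℝ)).symm y by rfl]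
  exact norm_add_le _ _

lemma enorm_smul {a : ℕ} (c : ℝ) (x : Fin a → ℝ) : euclNorm (c • x) = |c| * euclNorm x := by
  simp only [enorm_eq]
  rw [show (WithLp.equiv 2 (Fin a → ℝ)).symm (c • x)
      = c • (WithLp.equiv 2 (Fin a → ℝ)).symm x by rfl]
  rw [norm_smul, Real.norm_eq_abs]

lemma enorm_neg {a : ℕ} (x : Fin a → ℝ) : euclNorm (-x) = euclNorm x := by
  simp [euclNorm]

lemma enorm_sub_comm {a : ℕ} (x y : Fin a → ℝ) : euclNorm (x - y) = euclNorm (y - x) := by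
  rw [← enorm_neg (x - y), neg_sub]

lemma spec_nonneg {a b : ℕ} (M : Matrix (Fin a) (Fin b) ℝ) : 0 ≤ spec M := norm_nonneg _

lemma spec_mulVec_le {a b : ℕ} (M : Matrix (Fin a) (Fin b) ℝ) (v : Fin b → ℝ) :
    euclNorm (M *ᵥ v) ≤ spec M * euclNorm v := by
  have h := (LinearMap.toContinuousLinearMap (Matrix.toEuclideanLin M)).le_opNorm
    ((WithLp.equiv 2 (Fin b → ℝ)).symm v)
  rw [enorm_eq, enorm_eq]
  simpa [Matrix.toEuclideanLin_apply_piLp_toLp, spec] using h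

def RaySet {a : ℕ} (P : Matrix (Fin a) (Fin a) ℝ) : Set ℝ :=
  {r : ℝ | ∃ x : Fin a → ℝ, ∑ i, x i ^ 2 = 1 ∧ r = x ⬝ᵥ P *ᵥ x}

lemma eigMin_def {a : ℕ} (P : Matrix (Fin a) (Fin a) ℝ) : eigMin P = sInf (RaySet P) := rfl
lemma eigMax_def {a : ℕ} (P : Matrix (Fin a) (Fin a) ℝ) : eigMax P = sSup (RaySet P) := rfl

lemma isCompact_raySet {a : ℕ} (P : Matrix (Fin a) (Fin a) ℝ) : IsCompact (RaySet P) := by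
  have himg : RaySet P
      = (fun x : Fin a → ℝ => x ⬝ᵥ P *ᵥ x) '' {x : Fin a → ℝ | ∑ i, x i ^ 2 = 1} := by
    ext r
    constructor
    · rintro ⟨x, hx, rfl⟩; exact ⟨x, hx, rfl⟩
    · rintro ⟨x, hx, rfl⟩; exact ⟨x, hx, rfl⟩
  rw [himg]
  have hcont : Continuous (fun x : Fin a → ℝ => x ⬝ᵥ P *ᵥ x) := by
    simp only [dotProduct, mulVec]
    fun_prop
  have hS : IsCompact {x : Fin a → ℝ | ∑ i, x i ^ 2 = 1} := by
    apply Metric.isCompact_of_isClosed_isBounded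
    · exact isClosed_eq (by fun_prop) continuous_const
    · rw [Metric.isBounded_iff_subset_closedBall 0]
      refine ⟨1, fun x hx => ?_⟩
      simp only [Metric.mem_closedBall, dist_zero_right]
      rw [pi_norm_le_iff_of_nonneg (by norm_num)]
      intro i
      rw [Real.norm_eq_abs, ← Real.sqrt_one, ← Real.sqrt_sq_eq_abs]
      apply Real.sqrt_le_sqrt
      rw [← hx]
      exact Finset.single_le_sum (fun j _ => sq_nonneg (x j)) (by simp)
  exact hS.image hcont

lemma raySet_nonempty {a : ℕ} (ha : 0 < a) (P : Matrix (Fin a) (Fin a) ℝ) :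
    (RaySet P).Nonempty := by
  refine ⟨_, Pi.single ⟨0, ha⟩ 1, ?_, rfl⟩
  rw [Finset.sum_eq_single (⟨0, ha⟩ : Fin a)]
  · simp
  · intro j _ hj; simp [Pi.single_apply, hj]
  · simp

lemma eigMin_mul_le {a : ℕ} (P : Matrix (Fin a) (Fin a) ℝ) (w : Fin a → ℝ) :
    eigMin P * euclNorm w ^ 2 ≤ w ⬝ᵥ P *ᵥ w := by
  by_cases hw : w = 0
  · simp [hw, euclNorm]
  · have ht : 0 < euclNorm w := enorm_pos hw
    have ht2 : euclNorm w ^ 2 = ∑ i, w i ^ 2 := enorm_sq w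
    have hx1 : ∑ i, ((euclNorm w)⁻¹ • w) i ^ 2 = 1 := by
      simp only [Pi.smul_apply, smul_eq_mul, mul_pow]
      rw [← Finset.mul_sum, ← ht2]
      field_simp
    have hmem : ((euclNorm w)⁻¹ • w) ⬝ᵥ P *ᵥ ((euclNorm w)⁻¹ • w) ∈ RaySet P :=
      ⟨_, hx1, rfl⟩
    have hb : BddBelow (RaySet P) := (isCompact_raySet P).bddBelow
    have h := csInf_le hb hmem
    rw [smul_dotProduct, mulVec_smul, dotProduct_smul, smul_eq_mul, smul_eq_mul] at h
    have key : (euclNorm w)⁻¹ * ((euclNorm w)⁻¹ * (w ⬝ᵥ P *ᵥ w)) * euclNorm w ^ 2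
        = w ⬝ᵥ P *ᵥ w := by
      field_simp
    have h3 := mul_le_mul_of_nonneg_right h (sq_nonneg (euclNorm w))
    rw [key] at h3
    rw [eigMin_def]
    linarith

lemma le_eigMax_mul {a : ℕ} (P : Matrix (Fin a) (Fin a) ℝ) (w : Fin a → ℝ) :
    w ⬝ᵥ P *ᵥ w ≤ eigMax P * euclNorm w ^ 2 := by
  by_cases hw : w = 0
  · simp [hw, euclNorm]
  · have ht : 0 < euclNorm w := enorm_pos hw
    have ht2 : euclNorm w ^ 2 = ∑ i, w i ^ 2 := enorm_sq w
    have hx1 : ∑ i, ((euclNorm w)⁻¹ • w) i ^ 2 = 1 := by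
      simp only [Pi.smul_apply, smul_eq_mul, mul_pow]
      rw [← Finset.mul_sum, ← ht2]
      field_simp
    have hmem : ((euclNorm w)⁻¹ • w) ⬝ᵥ P *ᵥ ((euclNorm w)⁻¹ • w) ∈ RaySet P :=
      ⟨_, hx1, rfl⟩
    have hb : BddAbove (RaySet P) := (isCompact_raySet P).bddAbove
    have h := le_csSup hb hmem
    rw [smul_dotProduct, mulVec_smul, dotProduct_smul, smul_eq_mul, smul_eq_mul] at h
    have key : (euclNorm w)⁻¹ * ((euclNorm w)⁻¹ * (w ⬝ᵥ P *ᵥ w)) * euclNorm w ^ 2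
        = w ⬝ᵥ P *ᵥ w := by
      field_simp
    have h3 := mul_le_mul_of_nonneg_right h (sq_nonneg (euclNorm w))
    rw [key] at h3
    rw [eigMax_def]
    linarith

lemma eigMin_le_eigMax {a : ℕ} (ha : 0 < a) (P : Matrix (Fin a) (Fin a) ℝ) :
    eigMin P ≤ eigMax P := by
  rw [eigMin_def, eigMax_def]
  exact csInf_le_csSup (raySet_nonempty ha P) (isCompact_raySet P).bddBelow
    (isCompact_raySet P).bddAbove

lemma eigMin_pos {a : ℕ} (ha : 0 < a) {P : Matrix (Fin a) (Fin a) ℝ} (hP : P.PosDef) :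
    0 < eigMin P := by
  have hmem : sInf (RaySet P) ∈ RaySet P :=
    (isCompact_raySet P).sInf_mem (raySet_nonempty ha P)
  obtain ⟨x, hx1, hx2⟩ := hmem
  have hx0 : x ≠ 0 := by
    rintro rfl; simp at hx1
  have := hP.dotProduct_mulVec_pos hx0
  rw [eigMin_def, hx2]
  simpa using this

lemma dot_symm {a : ℕ} {M : Matrix (Fin a) (Fin a) ℝ} (hM : Mᵀ = M) (x y : Fin a → ℝ) :
    x ⬝ᵥ M *ᵥ y = y ⬝ᵥ M *ᵥ x := by
  rw [dotProduct_mulVec, ← mulVec_transpose, hM, dotProduct_comm]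

/-- expansion of the objective as a quadratic form -/
lemma Phi2_expand {m p : ℕ} (R : Matrix (Fin m) (Fin m) ℝ) (Q : Matrix (Fin p) (Fin p) ℝ)
    (hQsym : Qᵀ = Q) (lam ρgen : ℝ) (Hhat : Matrix (Fin p) (Fin m) ℝ) (d rk : Fin p → ℝ)
    (v : Fin m → ℝ) :
    Phi2 R Q lam ρgen Hhat d rk v
      = v ⬝ᵥ (R + lam • (Hhatᵀ * Q * Hhat) + ρgen • (1 : Matrix (Fin m) (Fin m) ℝ)) *ᵥ v
        + 2 * ((lam • ((Hhatᵀ * Q) *ᵥ (d - rk))) ⬝ᵥ v)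
        + lam * ((d - rk) ⬝ᵥ Q *ᵥ (d - rk)) := by
  unfold Phi2
  have h1 : Hhat *ᵥ v + d - rk = Hhat *ᵥ v + (d - rk) := by abel
  rw [h1]
  have hsum : ρgen * ∑ i, v i ^ 2 = ρgen * (v ⬝ᵥ v) := by
    congr 1; simp [dotProduct, sq]
  rw [hsum]
  have hcross : (d - rk) ⬝ᵥ Q *ᵥ (Hhat *ᵥ v) = (Hhat *ᵥ v) ⬝ᵥ Q *ᵥ (d - rk) :=
    dot_symm hQsym _ _
  have hc : ((Hhatᵀ * Q) *ᵥ (d - rk)) ⬝ᵥ v = (Hhat *ᵥ v) ⬝ᵥ Q *ᵥ (d - rk) := by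
    rw [dotProduct_comm, ← mulVec_mulVec, dotProduct_mulVec, vecMul_transpose]
  have hquad : v ⬝ᵥ (Hhatᵀ * Q * Hhat) *ᵥ v = (Hhat *ᵥ v) ⬝ᵥ Q *ᵥ (Hhat *ᵥ v) := by
    rw [← mulVec_mulVec, ← mulVec_mulVec, dotProduct_mulVec, vecMul_transpose]
  simp only [mulVec_add, dotProduct_add, add_dotProduct, add_mulVec, smul_mulVec,
    one_mulVec, dotProduct_smul, smul_dotProduct, smul_eq_mul, hcross, hc, hquad]
  ring

/-- first-order condition at a strict global minimizer of a quadratic -/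
lemma grad_zero {a : ℕ} {M : Matrix (Fin a) (Fin a) ℝ} (hMsym : Mᵀ = M)
    (hMpsd : ∀ w, 0 ≤ w ⬝ᵥ M *ᵥ w) (c us : Fin a → ℝ)
    (hmin : ∀ v : Fin a → ℝ, v ≠ us →
      us ⬝ᵥ M *ᵥ us + 2 * (c ⬝ᵥ us) < v ⬝ᵥ M *ᵥ v + 2 * (c ⬝ᵥ v)) :
    M *ᵥ us + c = 0 := by
  by_contra hg
  set g : Fin a → ℝ := M *ᵥ us + c with hgdef
  have hG : 0 < g ⬝ᵥ g := by
    have h0 : 0 ≤ g ⬝ᵥ g := Finset.sum_nonneg fun i _ => mul_self_nonneg (g i)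
    rcases lt_or_eq_of_le h0 with h | h
    · exact h
    · exact absurd (dotProduct_self_eq_zero.mp h.symm) hg
  set A := g ⬝ᵥ M *ᵥ g with hA
  have hA0 : 0 ≤ A := hMpsd g
  set G := g ⬝ᵥ g with hGdef
  set t : ℝ := G / (A + 1) with htdef
  have ht : 0 < t := div_pos hG (by linarith)
  have hv : us - t • g ≠ us := by
    intro h
    have : t • g = 0 := sub_eq_self.mp h
    rcases smul_eq_zero.mp this with h' | h'
    · exact ht.ne' h'
    · exact hg h'
  have hlt := hmin (us - t • g) hv
  have hs : g ⬝ᵥ M *ᵥ us = us ⬝ᵥ M *ᵥ g := dot_symm hMsym _ _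
  have hGg : g ⬝ᵥ (M *ᵥ us) + c ⬝ᵥ g = G := by
    rw [hGdef, hgdef]
    simp only [add_dotProduct, dotProduct_add]
    rw [dotProduct_comm c (M *ᵥ us)]
  have hexp : (us - t • g) ⬝ᵥ M *ᵥ (us - t • g) + 2 * (c ⬝ᵥ (us - t • g))
      = us ⬝ᵥ M *ᵥ us + 2 * (c ⬝ᵥ us) - 2 * t * (g ⬝ᵥ (M *ᵥ us) + c ⬝ᵥ g) + t ^ 2 * A := by
    simp only [mulVec_sub, mulVec_smul, dotProduct_sub, sub_dotProduct, dotProduct_smul,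
      smul_dotProduct, smul_eq_mul, hA]
    rw [hs]
    ring
  rw [hGg] at hexp
  rw [hexp] at hlt
  have hta : t * (A + 1) = G := by
    rw [htdef]; field_simp
  nlinarith [mul_pos ht hG, mul_pos ht ht, hta, hA0, hG, ht]

lemma op_bound {a : ℕ} {M : Matrix (Fin a) (Fin a) ℝ} (hMsym : Mᵀ = M) {c : ℝ} (hc : 0 ≤ c)
    (hpsd : ∀ w, 0 ≤ w ⬝ᵥ M *ᵥ w)
    (hmax : ∀ w, w ⬝ᵥ M *ᵥ w ≤ c * euclNorm w ^ 2) (w : Fin a → ℝ) :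
    euclNorm (M *ᵥ w) ≤ c * euclNorm w := by
  set v := M *ᵥ w with hv
  have hq : ∀ t : ℝ, 0 ≤ (w ⬝ᵥ M *ᵥ w) * (t * t) + (2 * (v ⬝ᵥ M *ᵥ w)) * t
      + v ⬝ᵥ M *ᵥ v := by
    intro t
    have h0 := hpsd (v + t • w)
    simp only [mulVec_add, mulVec_smul, dotProduct_add, add_dotProduct, dotProduct_smul,
      smul_dotProduct, smul_eq_mul] at h0
    have hsymm : w ⬝ᵥ M *ᵥ v = v ⬝ᵥ M *ᵥ w := dot_symm hMsym _ _
    rw [hsymm] at h0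
    ring_nf at h0 ⊢
    linarith
  have hd := discrim_le_zero hq
  rw [discrim] at hd
  have hvv : v ⬝ᵥ M *ᵥ w = euclNorm v ^ 2 := by rw [enorm_sq_dot]
  rw [hvv] at hd
  have h1 := hmax w
  have h2 := hmax v
  have hwn := enorm_nonneg w
  have hvn := enorm_nonneg v
  by_cases hv0 : euclNorm v = 0
  · rw [hv0]; positivity
  · have hvpos : 0 < euclNorm v := lt_of_le_of_ne hvn (Ne.symm hv0)
    have hprod : (w ⬝ᵥ M *ᵥ w) * (v ⬝ᵥ M *ᵥ v) ≤ (c * euclNorm w ^ 2) * (c * euclNorm v ^ 2) :=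
      mul_le_mul h1 h2 (hpsd v) (by positivity)
    have hsq : euclNorm v ^ 2 ≤ (c * euclNorm w) ^ 2 := by
      nlinarith [mul_pos hvpos hvpos]
    nlinarith [mul_nonneg hc hwn]

lemma contract {a : ℕ} (M : Matrix (Fin a) (Fin a) ℝ) (η μ L : ℝ) (hη : 0 < η)
    (hμpos : 0 < μ) (hμL : μ ≤ L)
    (hmin : ∀ w, (μ / 2) * euclNorm w ^ 2 ≤ w ⬝ᵥ M *ᵥ w)
    (hop : ∀ w, euclNorm (M *ᵥ w) ≤ (L / 2) * euclNorm w) (w : Fin a → ℝ) :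
    euclNorm (w - (2 * η) • (M *ᵥ w)) ≤ Real.sqrt (1 - η * (2 * μ - η * L ^ 2)) * euclNorm w := by
  have hfact : 0 ≤ 1 - η * (2 * μ - η * L ^ 2) := by
    nlinarith [sq_nonneg (1 - η * μ), sq_nonneg η,
      mul_nonneg (mul_nonneg hη.le hη.le)
        (mul_nonneg (sub_nonneg.2 hμL) (by linarith : (0:ℝ) ≤ L + μ))]
  have h1 := hmin w
  have h2 := hop w
  have h2' : euclNorm (M *ᵥ w) ^ 2 ≤ (L / 2 * euclNorm w) ^ 2 :=
    pow_le_pow_left₀ (enorm_nonneg _) h2 2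
  have hz2 : euclNorm (w - (2 * η) • (M *ᵥ w)) ^ 2
      ≤ (1 - η * (2 * μ - η * L ^ 2)) * euclNorm w ^ 2 := by
    rw [enorm_sq_dot]
    have hexp : (w - (2 * η) • (M *ᵥ w)) ⬝ᵥ (w - (2 * η) • (M *ᵥ w))
        = w ⬝ᵥ w - 4 * η * (w ⬝ᵥ M *ᵥ w) + 4 * η ^ 2 * ((M *ᵥ w) ⬝ᵥ (M *ᵥ w)) := by
      simp only [dotProduct_sub, sub_dotProduct, dotProduct_smul, smul_dotProduct, smul_eq_mul]
      rw [dotProduct_comm (M *ᵥ w) w]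
      ring
    rw [hexp, ← enorm_sq_dot, ← enorm_sq_dot]
    nlinarith [sq_nonneg (euclNorm w), mul_pos hη hη]
  calc euclNorm (w - (2 * η) • (M *ᵥ w))
      = Real.sqrt (euclNorm (w - (2 * η) • (M *ᵥ w)) ^ 2) :=
        (Real.sqrt_sq (enorm_nonneg _)).symm
    _ ≤ Real.sqrt ((1 - η * (2 * μ - η * L ^ 2)) * euclNorm w ^ 2) := Real.sqrt_le_sqrt hz2
    _ = Real.sqrt (1 - η * (2 * μ - η * L ^ 2)) * euclNorm w := by
        rw [Real.sqrt_mul hfact, Real.sqrt_sq (enorm_nonneg _)]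

end S11
/-- Lemma 2 of the paper for the ℓ2-controller (11). -/
theorem stmt11 {n m p : ℕ}
    (A : Matrix (Fin n) (Fin n) ℝ) (B : Matrix (Fin n) (Fin m) ℝ) (C : Matrix (Fin p) (Fin n) ℝ)
    (hA : spectralRadius ℂ (A.map Complex.ofReal) < 1)
    (Qbar P : Matrix (Fin n) (Fin n) ℝ) (hQbar : Qbar.PosDef) (hP : P.PosDef)
    (hLyap : Aᵀ * P * A - P + Qbar = 0)
    (R : Matrix (Fin m) (Fin m) ℝ) (Q : Matrix (Fin p) (Fin p) ℝ)
    (hR : R.PosSemidef) (hQ : Q.PosSemidef)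
    (lam : ℝ) (hlam : 0 ≤ lam) (Hhat : Matrix (Fin p) (Fin m) ℝ)
    (ρgen : ℝ) (hρgen : 0 < ρgen)
    (μ L : ℝ)
    (hμ : μ = 2 * eigMin (R + lam • (Hhatᵀ * Q * Hhat) + ρgen • (1 : Matrix (Fin m) (Fin m) ℝ)))
    (hμpos : 0 < μ)
    (hL : L = 2 * eigMax (R + lam • (Hhatᵀ * Q * Hhat) + ρgen • (1 : Matrix (Fin m) (Fin m) ℝ)))
    (r : ℕ → Fin p → ℝ) (η : ℝ) (hη : 0 < η) (hηrange : η < 2 * μ / L ^ 2)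
    (dx : ℕ → Fin n → ℝ) (dy : ℕ → Fin p → ℝ)
    (x : ℕ → Fin n → ℝ) (u : ℕ → Fin m → ℝ) (y : ℕ → Fin p → ℝ)
    (hdyn : ∀ k, x (k + 1) = A *ᵥ x k + B *ᵥ u k + dx k)
    (hout : ∀ k, y k = C *ᵥ x k + dy k)
    (hctrl : ∀ k, u (k + 1) =
      u k - (2 * η) • (R *ᵥ u k + lam • (Hhatᵀ *ᵥ (Q *ᵥ (y k - r k))) + ρgen • u k))
    (ustar : ℕ → Fin m → ℝ)
    (hustar : ∀ k, ∀ v : Fin m → ℝ, v ≠ ustar k →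
      Phi2 R Q lam ρgen Hhat (C *ᵥ ((1 - A)⁻¹ *ᵥ dx k) + dy k) (r k) (ustar k)
        < Phi2 R Q lam ρgen Hhat (C *ᵥ ((1 - A)⁻¹ *ᵥ dx k) + dy k) (r k) v)
    (H : Matrix (Fin p) (Fin m) ℝ) (hH : H = C * (1 - A)⁻¹ * B)
    (xss : ℕ → Fin n → ℝ) (hxss : ∀ k, xss k = (1 - A)⁻¹ *ᵥ (B *ᵥ u k + dx k))
    (α LTy : ℝ)
    (hα : α = Real.sqrt (1 - η * (2 * μ - η * L ^ 2)))
    (hLTy : LTy = 2 * lam * spec (Hhatᵀ * Q)) :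
    (0 ≤ α ∧ α < 1) ∧
      ∀ k : ℕ,
        euclNorm (u (k + 1) - ustar (k + 1))
          ≤ α * euclNorm (u k - ustar k)
            + η * (LTy * spec C / Real.sqrt (eigMin P)) * pnorm P (x k - xss k)
            + η * LTy * spec (H - Hhat) * euclNorm (u k)
            + euclNorm (ustar (k + 1) - ustar k) := by
  -- symmetry of Q and R
  have hQsym : Qᵀ = Q := by
    ext i j
    simp only [Matrix.transpose_apply]
    have h := congrFun (congrFun hQ.1 i) j
    simpa [Matrix.conjTranspose_apply] using h
  have hRsym : Rᵀ = R := by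
    ext i j
    simp only [Matrix.transpose_apply]
    have h := congrFun (congrFun hR.1 i) j
    simpa [Matrix.conjTranspose_apply] using h
  set M := R + lam • (Hhatᵀ * Q * Hhat) + ρgen • (1 : Matrix (Fin m) (Fin m) ℝ) with hM
  have hMsym : Mᵀ = M := by
    have h1 : (Hhatᵀ * Q * Hhat)ᵀ = Hhatᵀ * Q * Hhat := by
      rw [Matrix.transpose_mul, Matrix.transpose_mul, Matrix.transpose_transpose, hQsym,
        Matrix.mul_assoc]
    rw [hM, Matrix.transpose_add, Matrix.transpose_add, Matrix.transpose_smul,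
      Matrix.transpose_smul, Matrix.transpose_one, h1, hRsym]
  -- m is positive
  have hm : 0 < m := by
    rcases Nat.eq_zero_or_pos m with hm0 | hm0
    · exfalso
      subst hm0
      have he : S11.RaySet M = (∅ : Set ℝ) := by
        ext s
        simp [S11.RaySet]
      rw [hμ, S11.eigMin_def, he, Real.sInf_empty] at hμpos
      norm_num at hμpos
    · exact hm0
  -- quadratic bounds for M
  have hmin : ∀ w : Fin m → ℝ, (μ / 2) * euclNorm w ^ 2 ≤ w ⬝ᵥ M *ᵥ w := by
    intro w
    have h2 : μ / 2 = eigMin M := by rw [hμ]; ring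
    rw [h2]
    exact S11.eigMin_mul_le M w
  have hmax : ∀ w : Fin m → ℝ, w ⬝ᵥ M *ᵥ w ≤ (L / 2) * euclNorm w ^ 2 := by
    intro w
    have h2 : L / 2 = eigMax M := by rw [hL]; ring
    rw [h2]
    exact S11.le_eigMax_mul M w
  have hμL : μ ≤ L := by
    rw [hμ, hL]
    have := S11.eigMin_le_eigMax hm M
    linarith
  have hLpos : 0 < L := lt_of_lt_of_le hμpos hμL
  have hMpsd : ∀ w : Fin m → ℝ, 0 ≤ w ⬝ᵥ M *ᵥ w := fun w =>
    le_trans (mul_nonneg (by linarith) (sq_nonneg _)) (hmin w)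
  have hop : ∀ w : Fin m → ℝ, euclNorm (M *ᵥ w) ≤ (L / 2) * euclNorm w :=
    S11.op_bound hMsym (by linarith) hMpsd hmax
  -- properties of α
  have hα0 : 0 ≤ α := hα ▸ Real.sqrt_nonneg _
  have hα1 : α < 1 := by
    rw [hα]
    have hL2 : 0 < L ^ 2 := by positivity
    have h3 : η * L ^ 2 < 2 * μ := by
      have := (lt_div_iff₀ hL2).mp hηrange
      linarith
    have h4 : 0 < η * (2 * μ - η * L ^ 2) := mul_pos hη (by linarith)
    rw [show (1 : ℝ) = 1 ^ 2 by norm_num] at *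
    apply (Real.sqrt_lt' (by norm_num)).2
    norm_num
    linarith
  refine ⟨⟨hα0, hα1⟩, ?_⟩
  intro k
  set N := Hhatᵀ * Q with hN
  set dk := C *ᵥ ((1 - A)⁻¹ *ᵥ dx k) + dy k with hdk
  -- gradient of the objective vanishes at the minimizer
  have hgrad : M *ᵥ ustar k + lam • (N *ᵥ (dk - r k)) = 0 := by
    apply S11.grad_zero hMsym hMpsd
    intro v hv
    have h := hustar k v hv
    rw [S11.Phi2_expand R Q hQsym lam ρgen Hhat dk (r k) (ustar k),
      S11.Phi2_expand R Q hQsym lam ρgen Hhat dk (r k) v] at h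
    rw [← hM, ← hN] at h
    linarith
  set w := u k - ustar k with hw
  set e := C *ᵥ (x k - xss k) + (H - Hhat) *ᵥ u k with he
  have hy : y k - r k = Hhat *ᵥ u k + (dk - r k) + e := by
    rw [hout k, he, hdk, hxss k, hH]
    simp only [Matrix.mulVec_sub, Matrix.mulVec_add, Matrix.sub_mulVec, ← Matrix.mulVec_mulVec]
    abel
  have hbracket : R *ᵥ u k + lam • (Hhatᵀ *ᵥ (Q *ᵥ (y k - r k))) + ρgen • u k
      = M *ᵥ w + lam • (N *ᵥ e) := by
    have hNz : ∀ z : Fin p → ℝ, Hhatᵀ *ᵥ (Q *ᵥ z) = N *ᵥ z := fun z => by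
      rw [hN, ← Matrix.mulVec_mulVec]
    have hMu : ∀ v : Fin m → ℝ,
        M *ᵥ v = R *ᵥ v + lam • (N *ᵥ (Hhat *ᵥ v)) + ρgen • v := by
      intro v
      rw [hM, Matrix.add_mulVec, Matrix.add_mulVec, Matrix.smul_mulVec,
        Matrix.smul_mulVec, Matrix.one_mulVec, hN, Matrix.mulVec_mulVec]
    have hMust : M *ᵥ ustar k = -(lam • (N *ᵥ (dk - r k))) :=
      eq_neg_of_add_eq_zero_left hgrad
    rw [hy, hNz, hw, Matrix.mulVec_sub, hMu (u k), hMust]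
    simp only [Matrix.mulVec_add, smul_add]
    abel
  have hiter : u (k + 1) - ustar (k + 1)
      = (w - (2 * η) • (M *ᵥ w)) + (-(2 * η * lam)) • (N *ᵥ e)
        + (ustar k - ustar (k + 1)) := by
    rw [hctrl k, hbracket, hw]
    module
  -- contraction bound
  have t1 : euclNorm (w - (2 * η) • (M *ᵥ w)) ≤ α * euclNorm w := by
    rw [hα]
    exact S11.contract M η μ L hη hμpos hμL hmin hop w
  -- disturbance term bound
  have hLTy0 : 0 ≤ LTy := by
    rw [hLTy]
    have := S11.spec_nonneg N
    positivity
  have hA2 : euclNorm ((-(2 * η * lam)) • (N *ᵥ e))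
      ≤ η * LTy * spec C * euclNorm (x k - xss k)
        + η * LTy * spec (H - Hhat) * euclNorm (u k) := by
    rw [S11.enorm_smul, abs_neg, abs_of_nonneg (by positivity)]
    have h7 : euclNorm e ≤ spec C * euclNorm (x k - xss k) + spec (H - Hhat) * euclNorm (u k) := by
      rw [he]
      refine le_trans (S11.enorm_add_le _ _) ?_
      exact add_le_add (S11.spec_mulVec_le C _) (S11.spec_mulVec_le (H - Hhat) _)
    have h8 : euclNorm (N *ᵥ e)
        ≤ spec N * (spec C * euclNorm (x k - xss k) + spec (H - Hhat) * euclNorm (u k)) :=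
      le_trans (S11.spec_mulVec_le N e) (mul_le_mul_of_nonneg_left h7 (S11.spec_nonneg N))
    have h9 : 2 * η * lam * euclNorm (N *ᵥ e)
        ≤ 2 * η * lam * (spec N * (spec C * euclNorm (x k - xss k)
            + spec (H - Hhat) * euclNorm (u k))) :=
      mul_le_mul_of_nonneg_left h8 (by positivity)
    have h10 : 2 * η * lam * (spec N * (spec C * euclNorm (x k - xss k)
          + spec (H - Hhat) * euclNorm (u k)))
        = η * LTy * spec C * euclNorm (x k - xss k)
          + η * LTy * spec (H - Hhat) * euclNorm (u k) := by
      rw [hLTy]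
      ring
    linarith
  -- the P-weighted bound on the state term
  have hPterm : η * LTy * spec C * euclNorm (x k - xss k)
      ≤ η * (LTy * spec C / Real.sqrt (eigMin P)) * pnorm P (x k - xss k) := by
    rcases Nat.eq_zero_or_pos n with hn | hn
    · have hz : euclNorm (x k - xss k) = 0 := by
        subst hn
        simp [euclNorm]
      rw [hz, mul_zero]
      have hpn : 0 ≤ pnorm P (x k - xss k) := Real.sqrt_nonneg _
      have : 0 ≤ η * (LTy * spec C / Real.sqrt (eigMin P)) :=
        mul_nonneg hη.le (div_nonneg (mul_nonneg hLTy0 (S11.spec_nonneg C))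
          (Real.sqrt_nonneg _))
      exact mul_nonneg this hpn
    · have hpos := S11.eigMin_pos hn hP
      have hsp : 0 < Real.sqrt (eigMin P) := Real.sqrt_pos.2 hpos
      have hsq : Real.sqrt (eigMin P) * euclNorm (x k - xss k) ≤ pnorm P (x k - xss k) := by
        have hmul : Real.sqrt (eigMin P * euclNorm (x k - xss k) ^ 2)
            = Real.sqrt (eigMin P) * euclNorm (x k - xss k) := by
          rw [Real.sqrt_mul hpos.le, Real.sqrt_sq (S11.enorm_nonneg _)]
        rw [← hmul]
        exact Real.sqrt_le_sqrt (S11.eigMin_mul_le P _)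
      have h5 : euclNorm (x k - xss k) ≤ pnorm P (x k - xss k) / Real.sqrt (eigMin P) :=
        (le_div_iff₀ hsp).2 (by rw [mul_comm]; exact hsq)
      calc η * LTy * spec C * euclNorm (x k - xss k)
          ≤ η * LTy * spec C * (pnorm P (x k - xss k) / Real.sqrt (eigMin P)) := by
            exact mul_le_mul_of_nonneg_left h5
              (mul_nonneg (mul_nonneg hη.le hLTy0) (S11.spec_nonneg C))
        _ = η * (LTy * spec C / Real.sqrt (eigMin P)) * pnorm P (x k - xss k) := by
            ring
  -- put everything together
  have htri : euclNorm (u (k + 1) - ustar (k + 1))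
      ≤ euclNorm (w - (2 * η) • (M *ᵥ w)) + euclNorm ((-(2 * η * lam)) • (N *ᵥ e))
        + euclNorm (ustar k - ustar (k + 1)) := by
    rw [hiter]
    refine le_trans (S11.enorm_add_le _ _) ?_
    have := S11.enorm_add_le (w - (2 * η) • (M *ᵥ w)) ((-(2 * η * lam)) • (N *ᵥ e))
    linarith
  have hlast : euclNorm (ustar k - ustar (k + 1)) = euclNorm (ustar (k + 1) - ustar k) :=
    S11.enorm_sub_comm _ _
  rw [hlast] at htri
  linarith
end
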